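/- For every n ≥ 1, the square matrix (φ_λ(c_μ))_{λ,μ ∈ DP(n)} over ℚ is invertible; moreover φ_λ(c_λ) > 0 for every λ ∈ DP(n), and φ_λ(c_μ) = 0 unless W_{μ̂} is contained in some W_n-conjugate of W_{λ̂} (so the matrix is triangular with nonzero diagonal with respect to any linear order refining this containment order). -/

import Mathlib

/- Common definitions: the Coxeter group of type Bₙ realized as signed permutations,
   signed compositions, the reflection subgroups `W_A`, double partitions, marks,
   permutation characters, and the action on `ℝⁿ`. -/

attribute [local instance] Classical.propDecidable

namespace GBA

/-- The ambient group of permutations of `ℤ`. -/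
abbrev Q : Type := Equiv.Perm ℤ

/-- The generator `t_k`, swapping `k` and `-k`. -/
def tP (k : ℕ) : Q := Equiv.swap (k : ℤ) (-(k : ℤ))

/-- The generator `s_k`, swapping `k ↔ k+1` and `-k ↔ -(k+1)`. -/
def sP (k : ℕ) : Q := Equiv.swap (k : ℤ) ((k : ℤ) + 1) * Equiv.swap (-(k : ℤ)) (-((k : ℤ) + 1))

/-- The Coxeter group `Wₙ` of type `Bₙ`, realized as the group of permutations `w`
of `{-n, …, -1, 1, …, n}` (fixing everything else) with `w (-i) = - w i` for all `i`. -/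
def W (n : ℕ) : Subgroup Q where
  carrier := {w | (∀ i : ℤ, w (-i) = -(w i)) ∧ (∀ i : ℤ, (n : ℤ) < |i| → w i = i)}
  one_mem' := by refine ⟨fun i => ?_, fun i _ => ?_⟩ <;> simp
  mul_mem' := by
    rintro a b ⟨ha1, ha2⟩ ⟨hb1, hb2⟩
    refine ⟨fun i => ?_, fun i hi => ?_⟩
    · simp only [Equiv.Perm.mul_apply, hb1, ha1]
    · simp only [Equiv.Perm.mul_apply, hb2 i hi, ha2 i hi]
  inv_mem' := by
    rintro a ⟨ha1, ha2⟩
    refine ⟨fun i => a.injective ?_, fun i hi => a.injective ?_⟩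
    · rw [Equiv.Perm.coe_inv, Equiv.apply_symm_apply, ha1, Equiv.apply_symm_apply]
    · rw [Equiv.Perm.coe_inv, Equiv.apply_symm_apply, ha2 i hi]

/-- A signed composition of `n`: a list of nonzero integers whose absolute values sum to `n`. -/
def SC (n : ℕ) : Type := {A : List ℤ // (∀ a ∈ A, a ≠ 0) ∧ (A.map Int.natAbs).sum = n}

/-- The list of Coxeter generators attached to a signed composition (with an offset):
for each part `a` occupying positions `off+1, …, off+|a|`, the generators
`s_p` for `off+1 ≤ p ≤ off+|a|-1`, together with `t_{off+1}` if `a > 0`. -/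
def genList : ℕ → List ℤ → List Q
  | _, [] => []
  | off, a :: rest =>
      ((List.range (a.natAbs - 1)).map fun p => sP (off + p + 1))
        ++ (if 0 < a then [tP (off + 1)] else [])
        ++ genList (off + a.natAbs) rest

/-- The generating set `S_A` of the reflection subgroup `W_A`. -/
def SA {n : ℕ} (A : SC n) : Set Q := {x | x ∈ genList 0 A.1}

/-- The reflection subgroup `W_A` attached to a signed composition `A` of `n`. -/
def WA {n : ℕ} (A : SC n) : Subgroup Q := Subgroup.closure (SA A)

/-- The canonical Coxeter element `c_A` of `(W_A, S_A)`: the product of the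
generators in `S_A`, each occurring exactly once. -/
def cox {n : ℕ} (A : SC n) : Q := (genList 0 A.1).prod

/-- `c` is a Coxeter element of `(W_A, S_A)`: a product of all elements of `S_A`,
each occurring exactly once, in some order. -/
def IsCox {n : ℕ} (A : SC n) (c : Q) : Prop :=
  ∃ L : List Q, L.Perm (genList 0 A.1) ∧ L.prod = c

/-- The generating set `Sₙ = {t, s₁, …, s_{n-1}}` of `Wₙ`. -/
def SFull (n : ℕ) : Set Q := {x | x ∈ genList 0 [(n : ℤ)]}

/-- The length of `w` with respect to a generating set `S` (the minimal length
of an expression of `w` as a product of elements of `S`). -/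
noncomputable def lenS (S : Set Q) (w : Q) : ℕ :=
  sInf {k | ∃ L : List Q, (∀ x ∈ L, x ∈ S) ∧ L.length = k ∧ L.prod = w}

/-- The length function of `(Wₙ, Sₙ)`. -/
noncomputable def len (n : ℕ) : Q → ℕ := lenS (SFull n)

/-- A double partition of `n`: a pair `(λ⁺, λ⁻)` of partitions with `|λ⁺| + |λ⁻| = n`,
encoded by `|λ⁺| = k`. -/
def DP (n : ℕ) : Type := Σ k : Fin (n + 1), Nat.Partition k.1 × Nat.Partition (n - k.1)

noncomputable instance (n : ℕ) : Fintype (DP n) := by unfold DP; infer_instance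
noncomputable instance (n : ℕ) : DecidableEq (DP n) := by unfold DP; infer_instance

private lemma filter_sum_aux (L : List ℤ) (hL : ∀ a ∈ L, a ≠ 0) :
    ((L.filter (fun a => 0 < a)).map Int.natAbs).sum
      + ((L.filter (fun a => a < 0)).map Int.natAbs).sum = (L.map Int.natAbs).sum := by
  induction L with
  | nil => simp
  | cons a L ih =>
    have ha := hL a (by simp)
    have ih' := ih (fun x hx => hL x (by simp [hx]))
    by_cases h : 0 < a
    · simp only [List.filter_cons]
      rw [if_pos (by simpa using h), if_neg (by simpa using (by omega : ¬ a < 0))]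
      simp only [List.map_cons, List.sum_cons]
      omega
    · have h' : a < 0 := by omega
      simp only [List.filter_cons]
      rw [if_neg (by simpa using h), if_pos (by simpa using h')]
      simp only [List.map_cons, List.sum_cons]
      omega

/-- `λ̂ := λ⁺ ⊔ λ⁻`, the signed composition of `n` whose positive parts are the
parts of `λ⁺` and whose negative parts are the negatives of the parts of `λ⁻`. -/
noncomputable def hat {n : ℕ} (l : DP n) : SC n :=
  ⟨l.2.1.parts.toList.map (fun a : ℕ => (a : ℤ)) ++
      l.2.2.parts.toList.map (fun a : ℕ => -(a : ℤ)),
    by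
    constructor
    · intro a ha
      rw [List.mem_append] at ha
      rcases ha with h | h <;> obtain ⟨b, hb, rfl⟩ := List.exists_of_mem_map h
      · have := l.2.1.parts_pos (Multiset.mem_toList.1 hb); omega
      · have := l.2.2.parts_pos (Multiset.mem_toList.1 hb); omega
    · have hk : (l.1 : ℕ) ≤ n := Nat.lt_succ_iff.1 l.1.2
      have h1 := l.2.1.parts_sum
      have h2 := l.2.2.parts_sum
      rw [List.map_append, List.sum_append, List.map_map, List.map_map]
      simp only [Function.comp_def, Int.natAbs_neg, Int.natAbs_natCast]
      simp only [List.map_id']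
      rw [Multiset.sum_toList, Multiset.sum_toList, h1, h2]
      omega⟩

/-- `λ(A) ∈ DP(n)`: the double partition obtained by collecting the positive parts
and the (absolute values of the) negative parts of `A`. -/
noncomputable def lamOf {n : ℕ} (A : SC n) : DP n :=
  ⟨⟨((A.1.filter (fun a => 0 < a)).map Int.natAbs).sum, by
      have := filter_sum_aux A.1 A.2.1
      rw [A.2.2] at this
      omega⟩,
    ⟨(((A.1.filter (fun a => 0 < a)).map Int.natAbs : List ℕ) : Multiset ℕ),
      fun {i} hi => by
        obtain ⟨b, hb, rfl⟩ := List.exists_of_mem_map (by exact_mod_cast hi)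
        have := A.2.1 b (List.mem_of_mem_filter hb)
        omega,
      by simp⟩,
    ⟨(((A.1.filter (fun a => a < 0)).map Int.natAbs : List ℕ) : Multiset ℕ),
      fun {i} hi => by
        obtain ⟨b, hb, rfl⟩ := List.exists_of_mem_map (by exact_mod_cast hi)
        have := A.2.1 b (List.mem_of_mem_filter hb)
        omega,
      by
        have := filter_sum_aux A.1 A.2.1
        rw [A.2.2] at this
        simp only [Multiset.sum_coe]
        omega⟩⟩

/-- The permutation character `Ind_{W_A}^{Wₙ} 1`: its value at `w ∈ Wₙ` is the number
of cosets `x W_A` in `Wₙ/W_A` fixed by `w`, i.e. with `x⁻¹ w x ∈ W_A`. -/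
noncomputable def phi (n : ℕ) (A : SC n) (w : Q) : ℚ :=
  Nat.card {q : W n ⧸ (WA A).subgroupOf (W n) //
    ∃ x : W n, (QuotientGroup.mk x : W n ⧸ (WA A).subgroupOf (W n)) = q ∧
      (x : Q)⁻¹ * w * x ∈ WA A}

/-- The matrix `(φ_λ(c_μ))_{λ,μ ∈ DP(n)}`. -/
noncomputable def phiMat (n : ℕ) : Matrix (DP n) (DP n) ℚ :=
  fun lam mu => phi n (hat lam) (cox (hat mu))

/-- The matrix `(u_{λμ})`, the inverse of `(φ_λ(c_μ))`. -/
noncomputable def uMat (n : ℕ) : Matrix (DP n) (DP n) ℚ := (phiMat n)⁻¹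

/-- The conjugacy class `C(λ)` of `Wₙ` containing the Coxeter elements `c_A`
for `λ(A) = λ`, as a subset of the ambient permutation group. -/
def CC (n : ℕ) (lam : DP n) : Set Q :=
  {w | ∃ g ∈ W n, g * cox (hat lam) * g⁻¹ = w}

/-- The set `D_A` of distinguished (minimal length) coset representatives of `W_A` in `Wₙ`. -/
noncomputable def DA {n : ℕ} (A : SC n) : Set Q :=
  {x | x ∈ W n ∧ ∀ s ∈ SA A, len n x < len n (x * s)}

/-- `D_{AB} = D_A⁻¹ ∩ D_B`. -/
noncomputable def DAB {n : ℕ} (A B : SC n) : Set Q := {x | x⁻¹ ∈ DA A ∧ x ∈ DA B}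

/-- The mark `μ_{CA}` of `W_A` on `Wₙ/W_C`: the number of cosets `x W_C` with
`x⁻¹ W_A x ⊆ W_C`. -/
noncomputable def mark (n : ℕ) (C A : SC n) : ℕ :=
  Nat.card {q : W n ⧸ (WA C).subgroupOf (W n) //
    ∃ x : W n, (QuotientGroup.mk x : W n ⧸ (WA C).subgroupOf (W n)) = q ∧
      ∀ y ∈ WA A, (x : Q)⁻¹ * y * (x : Q) ∈ WA C}

/-- `𝒲(B) = D_{BB}^⊆ = {x ∈ D_{BB} : x⁻¹ W_B x ⊆ W_B}`, a complement of
`W_B` in its normalizer `N_{Wₙ}(W_B)`. -/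
noncomputable def Wcal {n : ℕ} (B : SC n) : Set Q :=
  {x | x ∈ DAB B B ∧ ∀ y ∈ WA B, x⁻¹ * y * x ∈ WA B}

/-- The induction to `Wₙ` of a class function `f` on a subgroup `H ⊆ Wₙ`
(`f` is extended by zero outside `H`):
`(Ind_H^{Wₙ} f)(w) = |H|⁻¹ Σ_{x ∈ Wₙ, x⁻¹wx ∈ H} f(x⁻¹wx)`. -/
noncomputable def ind (n : ℕ) (H : Subgroup Q) (f : Q → ℚ) (w : Q) : ℚ :=
  (∑ᶠ x ∈ (W n : Set Q), if x⁻¹ * w * x ∈ H then f (x⁻¹ * w * x) else 0) / (Nat.card H)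

/-- The action of a signed permutation on `ℝⁿ` (coordinates indexed `1, …, n`):
`w` sends `e_i` to `sgn(w(i)) e_{|w(i)|}`, so `(w · v)_j = sgn(w⁻¹(j)) v_{|w⁻¹(j)|}`. -/
noncomputable def act (n : ℕ) (w : Q) (v : Fin n → ℝ) : Fin n → ℝ := fun j =>
  (if 0 < w⁻¹ ((j : ℕ) + 1 : ℤ) then (1 : ℝ) else -1) *
    (if h : (w⁻¹ ((j : ℕ) + 1 : ℤ)).natAbs - 1 < n then v ⟨(w⁻¹ ((j : ℕ) + 1 : ℤ)).natAbs - 1, h⟩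
     else 0)

/-- `Fix(X) = {v ∈ ℝⁿ : x(v) = v for all x ∈ X}`. -/
noncomputable def FixSet (n : ℕ) (X : Set Q) : Set (Fin n → ℝ) :=
  {v | ∀ x ∈ X, act n x v = v}

/-- The parabolic closure `A(X)`: the pointwise stabilizer in `Wₙ` of `Fix(X)`. -/
noncomputable def pClosure (n : ℕ) (X : Set Q) : Set Q :=
  {w | w ∈ W n ∧ ∀ v ∈ FixSet n X, act n w v = v}

/-- The longest element `wₙ` of `Wₙ`, the signed permutation `i ↦ -i`
(acting as `-id` on `ℝⁿ`). -/
def wLong (n : ℕ) : Q :=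
  Function.Involutive.toPerm (fun i => if |i| ≤ (n : ℤ) then -i else i)
    (by intro i; by_cases h : |i| ≤ (n : ℤ) <;> simp [h, abs_neg])

/-- The double partition `((n), ∅)`. -/
noncomputable def topDP (n : ℕ) : DP n :=
  ⟨⟨n, Nat.lt_succ_self n⟩, Nat.Partition.indiscrete n,
    ⟨0, by simp, by simp⟩⟩

/-- The double partition `(∅, (1ⁿ)) = λ((-1, …, -1))`. -/
noncomputable def botDP (n : ℕ) : DP n :=
  ⟨⟨0, Nat.succ_pos n⟩, ⟨0, by simp, by simp⟩,
    ⟨Multiset.replicate n 1,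
      fun {i} hi => by rw [Multiset.eq_of_mem_replicate hi]; norm_num,
      by simp [Multiset.sum_replicate]⟩⟩

theorem Equiv.Perm.apply_inv_self {α : Type*} (f : Equiv.Perm α) (x : α) : f (f⁻¹ x) = x :=
  Equiv.apply_symm_apply f x

theorem Equiv.Perm.inv_apply_self {α : Type*} (f : Equiv.Perm α) (x : α) : f⁻¹ (f x) = x :=
  Equiv.symm_apply_apply f x

def sumAbs (L : List ℤ) : ℕ := (L.map Int.natAbs).sum

@[simp] lemma sumAbs_nil : sumAbs [] = 0 := rfl
@[simp] lemma sumAbs_cons (a : ℤ) (L : List ℤ) : sumAbs (a :: L) = a.natAbs + sumAbs L := by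
  simp [sumAbs]
@[simp] lemma sumAbs_append (L M : List ℤ) : sumAbs (L ++ M) = sumAbs L + sumAbs M := by
  induction L with
  | nil => simp
  | cons a L ih => simp [ih]; omega

lemma tP_apply (k : ℕ) (z : ℤ) : tP k z = if z = k then -(k:ℤ) else if z = -(k:ℤ) then k else z := by
  simp only [tP, Equiv.swap_apply_def]

lemma sP_apply (k : ℕ) (hk : 1 ≤ k) (z : ℤ) :
    sP k z = if z = k then (k:ℤ)+1 else if z = (k:ℤ)+1 then k
      else if z = -(k:ℤ) then -(k:ℤ)-1 else if z = -(k:ℤ)-1 then -(k:ℤ) else z := by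
  simp only [sP, Equiv.Perm.mul_apply, Equiv.swap_apply_def]
  split_ifs <;> omega

lemma tP_neg (k : ℕ) (z : ℤ) : tP k (-z) = -(tP k z) := by
  rw [tP_apply, tP_apply]; split_ifs <;> omega

lemma sP_neg (k : ℕ) (hk : 1 ≤ k) (z : ℤ) : sP k (-z) = -(sP k z) := by
  rw [sP_apply k hk, sP_apply k hk]; split_ifs <;> omega

lemma tP_sq (k : ℕ) : tP k * tP k = 1 := by
  ext z
  simp only [Equiv.Perm.mul_apply, Equiv.Perm.one_apply, tP_apply]
  split_ifs <;> omega

lemma sP_sq (k : ℕ) (hk : 1 ≤ k) : sP k * sP k = 1 := by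
  ext z
  simp only [Equiv.Perm.mul_apply, Equiv.Perm.one_apply, sP_apply k hk]
  split_ifs <;> omega

def swapP (u v : ℤ) : Q := Equiv.swap u v * Equiv.swap (-u) (-v)

lemma swapP_apply (u v : ℤ) (hu : u ≠ 0) (hv : v ≠ 0) (hne : u.natAbs ≠ v.natAbs) (z : ℤ) :
    swapP u v z = if z = u then v else if z = v then u
      else if z = -u then -v else if z = -v then -u else z := by
  simp only [swapP, Equiv.Perm.mul_apply, Equiv.swap_apply_def]
  split_ifs <;> omega

lemma swapP_comm (u v : ℤ) : swapP u v = swapP v u := by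
  unfold swapP; rw [Equiv.swap_comm, Equiv.swap_comm (-u)]

lemma swapP_neg (u v : ℤ) (hu : u ≠ 0) (hv : v ≠ 0) : swapP (-u) (-v) = swapP u v := by
  unfold swapP
  ext z
  simp only [Equiv.Perm.mul_apply, Equiv.swap_apply_def, neg_neg]
  split_ifs <;> omega

lemma inv_neg_apply (x : Q) (hx : ∀ z, x (-z) = -(x z)) (z : ℤ) : x⁻¹ (-z) = -(x⁻¹ z) := by
  apply x.injective
  rw [hx, Equiv.Perm.apply_inv_self, Equiv.Perm.apply_inv_self]

lemma conj_swapP (x : Q) (hx : ∀ z, x (-z) = -(x z)) (u v : ℤ) :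
    x⁻¹ * swapP u v * x = swapP (x⁻¹ u) (x⁻¹ v) := by
  have h1 : Equiv.swap (x⁻¹ u) (x⁻¹ v) = x⁻¹ * Equiv.swap u v * x := by
    rw [Equiv.swap_apply_apply x⁻¹ u v]; simp
  have h2 : Equiv.swap (-(x⁻¹ u)) (-(x⁻¹ v)) = x⁻¹ * Equiv.swap (-u) (-v) * x := by
    rw [← inv_neg_apply x hx, ← inv_neg_apply x hx, Equiv.swap_apply_apply x⁻¹]; simp
  unfold swapP
  rw [h1, h2]
  group

lemma conj_swap (x : Q) (u v : ℤ) :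
    x⁻¹ * Equiv.swap u v * x = Equiv.swap (x⁻¹ u) (x⁻¹ v) := by
  rw [Equiv.swap_apply_apply x⁻¹ u v]; simp

lemma sP_eq_swapP (k : ℕ) : sP k = swapP (k:ℤ) ((k:ℤ)+1) := by
  unfold sP swapP
  norm_num

lemma tP_eq_swap (k : ℕ) : tP k = Equiv.swap (k:ℤ) (-(k:ℤ)) := rfl

/-! ### blk : locating the block containing a point -/

def blk : List ℤ → ℕ → ℤ → Option (ℕ × ℤ)
  | [], _, _ => none
  | a :: rest, off, z =>
      if z.natAbs ≤ off + a.natAbs then some (off, a) else blk rest (off + a.natAbs) z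

@[simp] lemma blk_nil (off : ℕ) (z : ℤ) : blk [] off z = none := rfl

lemma blk_cons (a : ℤ) (rest : List ℤ) (off : ℕ) (z : ℤ) :
    blk (a :: rest) off z =
      if z.natAbs ≤ off + a.natAbs then some (off, a) else blk rest (off + a.natAbs) z := rfl

lemma blk_neg (L : List ℤ) (off : ℕ) (z : ℤ) : blk L off (-z) = blk L off z := by
  induction L generalizing off with
  | nil => rfl
  | cons a rest ih => rw [blk_cons, blk_cons, Int.natAbs_neg, ih]

lemma blk_sound {L : List ℤ} {off o : ℕ} {a : ℤ} {z : ℤ} (hz : off < z.natAbs)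
    (h : blk L off z = some (o, a)) :
    (∃ pre suf, L = pre ++ a :: suf ∧ o = off + sumAbs pre) ∧
      o < z.natAbs ∧ z.natAbs ≤ o + a.natAbs := by
  induction L generalizing off with
  | nil => simp at h
  | cons b rest ih =>
    rw [blk_cons] at h
    split at h
    · obtain ⟨h1, h2⟩ := Prod.mk.injEq .. ▸ Option.some.injEq _ _ ▸ h
      refine ⟨⟨[], rest, by rw [← h2]; rfl, by simp [← h1]⟩, ?_, ?_⟩ <;> omega
    · rename_i hgt
      obtain ⟨⟨pre, suf, hL, ho⟩, h1, h2⟩ := ih (by omega) h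
      exact ⟨⟨b :: pre, suf, by rw [hL, List.cons_append], by simp [ho]; omega⟩, h1, h2⟩

lemma blk_total {L : List ℤ} {off : ℕ} {z : ℤ} (h1 : off < z.natAbs)
    (h2 : z.natAbs ≤ off + sumAbs L) : ∃ o a, blk L off z = some (o, a) := by
  induction L generalizing off with
  | nil => simp at h1 h2; omega
  | cons b rest ih =>
    rw [blk_cons]
    split
    · exact ⟨off, b, rfl⟩
    · rename_i hgt
      exact ih (by omega) (by simp at h2 ⊢; omega)

lemma blk_of_block' {pre suf : List ℤ} {a : ℤ} {o off : ℕ} {z : ℤ}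
    (ho : o = off + sumAbs pre) (h1 : o < z.natAbs) (h2 : z.natAbs ≤ o + a.natAbs) :
    blk (pre ++ a :: suf) off z = some (o, a) := by
  induction pre generalizing off with
  | nil => simp at ho; rw [List.nil_append, blk_cons, if_pos (by omega), ho]
  | cons b pre ih =>
    rw [List.cons_append, blk_cons, if_neg (by simp at ho; omega)]
    exact ih (by simp at ho ⊢; omega) 

lemma blk_of_block {L pre suf : List ℤ} {a : ℤ} {o : ℕ} {z : ℤ}
    (hL : L = pre ++ a :: suf) (ho : o = sumAbs pre) (h1 : o < z.natAbs)
    (h2 : z.natAbs ≤ o + a.natAbs) : blk L 0 z = some (o, a) := by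
  subst hL; exact blk_of_block' (by omega) h1 h2

/-! ### genList structure -/

lemma genList_cons (off : ℕ) (a : ℤ) (rest : List ℤ) :
    genList off (a :: rest) =
      ((List.range (a.natAbs - 1)).map fun p => sP (off + p + 1))
        ++ (if 0 < a then [tP (off + 1)] else [])
        ++ genList (off + a.natAbs) rest := rfl

lemma genList_append (off : ℕ) (M N : List ℤ) :
    genList off (M ++ N) = genList off M ++ genList (off + sumAbs M) N := by
  induction M generalizing off with
  | nil => simp [genList]
  | cons a M ih =>
    rw [List.cons_append, genList_cons, genList_cons, ih]
    have : off + a.natAbs + sumAbs M = off + sumAbs (a :: M) := by simp; omega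
    rw [this]
    simp [List.append_assoc]

lemma mem_genList {x : Q} {off : ℕ} {L : List ℤ} (hx : x ∈ genList off L) :
    ∃ pre a suf, L = pre ++ a :: suf ∧
      ((∃ j : ℕ, 1 ≤ j ∧ j ≤ a.natAbs - 1 ∧ x = sP (off + sumAbs pre + j)) ∨
        (0 < a ∧ x = tP (off + sumAbs pre + 1))) := by
  induction L generalizing off with
  | nil => simp [genList] at hx
  | cons a rest ih =>
    rw [genList_cons] at hx
    rcases List.mem_append.1 hx with h | h
    · rcases List.mem_append.1 h with h | h
      · obtain ⟨p, hp, rfl⟩ := List.mem_map.1 h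
        rw [List.mem_range] at hp
        exact ⟨[], a, rest, rfl, Or.inl ⟨p + 1, by omega, by omega, by simp; ring_nf⟩⟩
      · split at h
        · rename_i ha
          rcases List.mem_singleton.1 h with rfl
          exact ⟨[], a, rest, rfl, Or.inr ⟨ha, by simp⟩⟩
        · simp at h
    · obtain ⟨pre, b, suf, hL, hcase⟩ := ih h
      refine ⟨a :: pre, b, suf, by rw [hL, List.cons_append], ?_⟩
      have : off + a.natAbs + sumAbs pre = off + sumAbs (a :: pre) := by simp; omega
      rw [this] at hcase
      exact hcase

lemma sP_mem_genList {a : ℤ} (o : ℕ) (j : ℕ) (h1 : 1 ≤ j) (h2 : j ≤ a.natAbs - 1) :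
    sP (o + j) ∈ genList o [a] := by
  rw [genList_cons]
  refine List.mem_append.2 (Or.inl (List.mem_append.2 (Or.inl ?_)))
  refine List.mem_map.2 ⟨j - 1, List.mem_range.2 (by omega), ?_⟩
  congr 1; omega

lemma tP_mem_genList {a : ℤ} (o : ℕ) (ha : 0 < a) : tP (o + 1) ∈ genList o [a] := by
  rw [genList_cons]
  refine List.mem_append.2 (Or.inl (List.mem_append.2 (Or.inr ?_)))
  rw [if_pos ha]; exact List.mem_singleton.2 rfl

lemma genList_block_sub {pre suf : List ℤ} {a : ℤ} {o : ℕ} (ho : o = sumAbs pre) :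
    ∀ x ∈ genList o [a], x ∈ genList 0 (pre ++ a :: suf) := by
  intro x hx
  rw [genList_append, List.mem_append]
  right
  rw [genList_cons] at hx ⊢
  rcases List.mem_append.1 hx with h | h
  · subst ho
    rw [Nat.zero_add]
    exact List.mem_append.2 (Or.inl h)
  · simp [genList] at h

/-! ### subgroups -/

def WL (L : List ℤ) : Subgroup Q := Subgroup.closure {x | x ∈ genList 0 L}

lemma WA_eq_WL {n : ℕ} (A : SC n) : WA A = WL A.1 := rfl

def blkSub (o : ℕ) (a : ℤ) : Subgroup Q := Subgroup.closure {x | x ∈ genList o [a]}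

lemma blkSub_le_WL {L pre suf : List ℤ} {a : ℤ} {o : ℕ}
    (hL : L = pre ++ a :: suf) (ho : o = sumAbs pre) : blkSub o a ≤ WL L := by
  subst hL
  exact Subgroup.closure_le _ |>.2 fun x hx =>
    Subgroup.subset_closure (genList_block_sub ho x hx)

lemma swapP_sq {u v : ℤ} (hu : u ≠ 0) (hv : v ≠ 0) (hne : u.natAbs ≠ v.natAbs) :
    swapP u v * swapP u v = 1 := by
  ext z
  simp only [Equiv.Perm.mul_apply, Equiv.Perm.one_apply,
    swapP_apply u v hu hv hne]
  split_ifs <;> omega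

lemma swapP_inv {u v : ℤ} (hu : u ≠ 0) (hv : v ≠ 0) (hne : u.natAbs ≠ v.natAbs) :
    (swapP u v)⁻¹ = swapP u v :=
  inv_eq_of_mul_eq_one_right (swapP_sq hu hv hne)

lemma swapP_equiv {u v : ℤ} (hu : u ≠ 0) (hv : v ≠ 0) (hne : u.natAbs ≠ v.natAbs) (z : ℤ) :
    swapP u v (-z) = -(swapP u v z) := by
  rw [swapP_apply u v hu hv hne, swapP_apply u v hu hv hne]
  split_ifs <;> omega

lemma swapT_neg (w z : ℤ) : Equiv.swap w (-w) (-z) = -(Equiv.swap w (-w) z) := by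
  simp only [Equiv.swap_apply_def]
  split_ifs <;> omega

lemma swapT_inv (w : ℤ) : (Equiv.swap w (-w))⁻¹ = Equiv.swap w (-w) := Equiv.swap_inv w (-w)

lemma swapP_succ_mem (o : ℕ) (a : ℤ) {u : ℤ} (h1 : (o:ℤ) < u) (h2 : u + 1 ≤ (o:ℤ) + a.natAbs) :
    swapP u (u + 1) ∈ blkSub o a := by
  have hu : ((u.toNat : ℕ) : ℤ) = u := Int.toNat_of_nonneg (by omega)
  have hmem := sP_mem_genList (a := a) o (u.toNat - o) (by omega) (by omega)
  rw [show o + (u.toNat - o) = u.toNat by omega] at hmem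
  have : sP u.toNat = swapP u (u + 1) := by rw [sP_eq_swapP, hu]
  rw [← this]
  exact Subgroup.subset_closure hmem

lemma swapP_succ_mem' (o : ℕ) (a : ℤ) {u v : ℤ} (hv : v = u + 1) (h1 : (o:ℤ) < u)
    (h2 : v ≤ (o:ℤ) + a.natAbs) : swapP u v ∈ blkSub o a := by
  subst hv; exact swapP_succ_mem o a h1 h2

lemma swapP_mem_pos (o : ℕ) (a : ℤ) :
    ∀ (d : ℕ) {u v : ℤ}, v = u + 1 + d → (o:ℤ) < u → v ≤ (o:ℤ) + a.natAbs →
      swapP u v ∈ blkSub o a := by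
  intro d
  induction d with
  | zero =>
    intro u v hv h1 h2
    exact swapP_succ_mem' o a (by omega) h1 h2
  | succ d ih =>
    intro u v hv h1 h2
    set g := swapP (v - 1) v with hgdef
    have hv1 : v - 1 ≠ 0 := by omega
    have hv2 : v ≠ 0 := by omega
    have hvne : (v - 1).natAbs ≠ v.natAbs := by omega
    have hgmem : g ∈ blkSub o a := swapP_succ_mem' o a (by ring) (by omega) (by omega)
    have hginv : g⁻¹ = g := swapP_inv hv1 hv2 hvne
    have hgequiv : ∀ z, g (-z) = -(g z) := swapP_equiv hv1 hv2 hvne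
    have hconj := conj_swapP g hgequiv u (v - 1)
    rw [hginv] at hconj
    have hgu : g u = u := by
      rw [hgdef, swapP_apply _ _ hv1 hv2 hvne]; split_ifs <;> omega
    have hgv : g (v - 1) = v := by
      rw [hgdef, swapP_apply _ _ hv1 hv2 hvne]; split_ifs <;> omega
    rw [hgu, hgv] at hconj
    rw [← hconj]
    exact mul_mem (mul_mem hgmem (ih (by omega) h1 (by omega))) hgmem

lemma tswap_mem (o : ℕ) (a : ℤ) (ha : 0 < a) :
    ∀ (d : ℕ) {u : ℤ}, u = (o:ℤ) + 1 + d → u ≤ (o:ℤ) + a.natAbs →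
      Equiv.swap u (-u) ∈ blkSub o a := by
  intro d
  induction d with
  | zero =>
    intro u hu h2
    have h3 : u = ((o + 1 : ℕ) : ℤ) := by push_cast; omega
    rw [h3, ← tP_eq_swap]
    exact Subgroup.subset_closure (tP_mem_genList o ha)
  | succ d ih =>
    intro u hu h2
    set g := swapP (u - 1) u with hgdef
    have hu1 : u - 1 ≠ 0 := by omega
    have hu2 : u ≠ 0 := by omega
    have hune : (u - 1).natAbs ≠ u.natAbs := by omega
    have hgmem : g ∈ blkSub o a := swapP_succ_mem' o a (by ring) (by omega) (by omega)
    have hginv : g⁻¹ = g := swapP_inv hu1 hu2 hune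
    have hconj := conj_swap g (u - 1) (-(u - 1))
    rw [hginv] at hconj
    have hgu : g (u - 1) = u := by
      rw [hgdef, swapP_apply _ _ hu1 hu2 hune]; split_ifs <;> omega
    have hgv : g (-(u - 1)) = -u := by
      rw [hgdef, swapP_apply _ _ hu1 hu2 hune]; split_ifs <;> omega
    rw [hgu, hgv] at hconj
    rw [← hconj]
    exact mul_mem (mul_mem hgmem (ih (by omega) (by omega))) hgmem

lemma tswap_mem' (o : ℕ) (a : ℤ) (ha : 0 < a) {u : ℤ}
    (h1 : o < u.natAbs) (h2 : u.natAbs ≤ o + a.natAbs) :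
    Equiv.swap u (-u) ∈ blkSub o a := by
  rcases lt_or_gt_of_ne (show u ≠ 0 by omega) with h | h
  · have : Equiv.swap u (-u) = Equiv.swap (-u) (-(-u)) := by
      rw [neg_neg, Equiv.swap_comm]
    rw [this]
    exact tswap_mem o a ha (u.natAbs - o - 1) (by omega) (by omega)
  · exact tswap_mem o a ha (u.natAbs - o - 1) (by omega) (by omega)

lemma swapP_mem_blk {o : ℕ} {a : ℤ} {u v : ℤ}
    (hu1 : o < u.natAbs) (hu2 : u.natAbs ≤ o + a.natAbs)
    (hv1 : o < v.natAbs) (hv2 : v.natAbs ≤ o + a.natAbs)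
    (hne : u.natAbs ≠ v.natAbs)
    (hsgn : a < 0 → (0 < u ↔ 0 < v)) (ha : a ≠ 0) : swapP u v ∈ blkSub o a := by
  have hu0 : u ≠ 0 := by omega
  have hv0 : v ≠ 0 := by omega
  have mainpp : ∀ p q : ℤ, (o:ℤ) < p → (o:ℤ) < q → p ≠ q →
      p ≤ (o:ℤ) + a.natAbs → q ≤ (o:ℤ) + a.natAbs → swapP p q ∈ blkSub o a := by
    intro p q h1 h2 h3 h4 h5
    rcases lt_or_gt_of_ne h3 with h | h
    · exact swapP_mem_pos o a (q - (p + 1)).toNat (by omega) h1 h5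
    · rw [swapP_comm]
      exact swapP_mem_pos o a (p - (q + 1)).toNat (by omega) h2 h4
  -- mixed-sign helper (for positive blocks)
  have mixed : ∀ p q : ℤ, 0 < p → q < 0 → p.natAbs ≠ q.natAbs →
      o < p.natAbs → p.natAbs ≤ o + a.natAbs → o < q.natAbs → q.natAbs ≤ o + a.natAbs →
      0 < a → swapP p q ∈ blkSub o a := by
    intro p q hp hq hpq hp1 hp2 hq1 hq2 hapos
    set T := Equiv.swap (-q) (-(-q)) with hT
    have hTmem : T ∈ blkSub o a := tswap_mem' o a hapos (by omega) (by omega)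
    have hTinv : T⁻¹ = T := swapT_inv (-q)
    have hTequiv : ∀ z, T (-z) = -(T z) := swapT_neg (-q)
    have hconj := conj_swapP T hTequiv p (-q)
    rw [hTinv] at hconj
    have hTp : T p = p := by
      rw [hT, Equiv.swap_apply_def]; split_ifs <;> omega
    have hTq : T (-q) = q := by
      rw [hT, Equiv.swap_apply_def]; split_ifs <;> omega
    rw [hTp, hTq] at hconj
    rw [← hconj]
    exact mul_mem (mul_mem hTmem (mainpp p (-q) (by omega) (by omega) (by omega)
      (by omega) (by omega))) hTmem
  rcases lt_or_gt_of_ne hu0 with hus | hus <;> rcases lt_or_gt_of_ne hv0 with hvs | hvs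
  · -- both negative
    rw [← swapP_neg u v hu0 hv0]
    exact mainpp (-u) (-v) (by omega) (by omega) (by omega) (by omega) (by omega)
  · -- u < 0 < v : mixed, so a > 0
    have hapos : 0 < a := by
      rcases lt_or_gt_of_ne ha with h | h
      · exact absurd ((hsgn h).2 hvs) (by omega)
      · exact h
    rw [swapP_comm]
    exact mixed v u hvs hus (by omega) hv1 hv2 hu1 hu2 hapos
  · -- v < 0 < u
    have hapos : 0 < a := by
      rcases lt_or_gt_of_ne ha with h | h
      · exact absurd ((hsgn h).1 hus) (by omega)
      · exact h
    exact mixed u v hus hvs hne hu1 hu2 hv1 hv2 hapos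
  · -- both positive
    exact mainpp u v (by omega) (by omega) (by omega) (by omega) (by omega)

def Ecar (L : List ℤ) (w : Q) : Prop :=
  w 0 = 0 ∧ ∀ z : ℤ, blk L 0 (w z) = blk L 0 z ∧
    (∀ o a, blk L 0 z = some (o, a) → a < 0 → (0 < z ↔ 0 < w z))

def Esub (L : List ℤ) : Subgroup Q where
  carrier := {w | Ecar L w}
  one_mem' := ⟨rfl, fun z => ⟨rfl, fun _ _ _ _ => Iff.rfl⟩⟩
  mul_mem' := by
    rintro x y ⟨hx0, hx⟩ ⟨hy0, hy⟩
    refine ⟨by simp only [Equiv.Perm.mul_apply, hy0, hx0], fun z => ?_⟩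
    constructor
    · rw [Equiv.Perm.mul_apply, (hx (y z)).1, (hy z).1]
    · intro o a hblk hneg
      have h1 := (hy z).2 o a hblk hneg
      have h2 := (hx (y z)).2 o a (by rw [(hy z).1]; exact hblk) hneg
      rw [Equiv.Perm.mul_apply]
      exact h1.trans h2
  inv_mem' := by
    rintro x ⟨hx0, hx⟩
    have hinv0 : x⁻¹ 0 = 0 := by
      apply x.injective; rw [Equiv.Perm.apply_inv_self, hx0]
    refine ⟨hinv0, fun z => ?_⟩
    constructor
    · conv_rhs => rw [← Equiv.Perm.apply_inv_self x z]
      rw [(hx (x⁻¹ z)).1]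
    · intro o a hblk hneg
      have hblk' : blk L 0 (x⁻¹ z) = some (o, a) := by
        rw [← (hx (x⁻¹ z)).1, Equiv.Perm.apply_inv_self]; exact hblk
      have := (hx (x⁻¹ z)).2 o a hblk' hneg
      rw [Equiv.Perm.apply_inv_self] at this
      exact this.symm

lemma mem_Esub {L : List ℤ} {w : Q} : w ∈ Esub L ↔ Ecar L w := Iff.rfl

lemma WL_le_Esub (L : List ℤ) : WL L ≤ Esub L := by
  rw [WL, Subgroup.closure_le]
  intro x hx
  obtain ⟨pre, a, suf, hL, hcase⟩ := mem_genList hx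
  have hbb : ∀ z : ℤ, sumAbs pre < z.natAbs → z.natAbs ≤ sumAbs pre + a.natAbs →
      blk L 0 z = some (sumAbs pre, a) := fun z h1 h2 => blk_of_block hL rfl h1 h2
  set o := sumAbs pre with hodef
  rcases hcase with ⟨j, hj1, hj2, rfl⟩ | ⟨ha, rfl⟩
  · -- sP generator
    set k := 0 + o + j with hkdef
    have hk : 1 ≤ k := by omega
    have hja : j ≤ a.natAbs - 1 := hj2
    have hane : 1 ≤ a.natAbs := by omega
    have hval := sP_apply k hk
    refine ⟨by rw [hval 0]; split_ifs <;> omega, fun z => ?_⟩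
    by_cases h1 : z = (k:ℤ)
    · have hxz : sP k z = (k:ℤ) + 1 := by rw [hval z]; split_ifs <;> omega
      have e1 : blk L 0 z = some (o, a) := hbb z (by omega) (by omega)
      have e2 : blk L 0 ((k:ℤ)+1) = some (o, a) := hbb _ (by omega) (by omega)
      refine ⟨by rw [hxz, e2, e1], fun o' a' hblk hneg => by rw [hxz]; omega⟩
    · by_cases h2 : z = (k:ℤ) + 1
      · have hxz : sP k z = (k:ℤ) := by rw [hval z]; split_ifs <;> omega
        have e1 : blk L 0 z = some (o, a) := hbb z (by omega) (by omega)
        have e2 : blk L 0 ((k:ℤ)) = some (o, a) := hbb _ (by omega) (by omega)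
        refine ⟨by rw [hxz, e2, e1], fun o' a' hblk hneg => by rw [hxz]; omega⟩
      · by_cases h3 : z = -(k:ℤ)
        · have hxz : sP k z = -(k:ℤ) - 1 := by rw [hval z]; split_ifs <;> omega
          have e1 : blk L 0 z = some (o, a) := hbb z (by omega) (by omega)
          have e2 : blk L 0 (-(k:ℤ)-1) = some (o, a) := hbb _ (by omega) (by omega)
          refine ⟨by rw [hxz, e2, e1], fun o' a' hblk hneg => by rw [hxz]; omega⟩
        · by_cases h4 : z = -(k:ℤ) - 1
          · have hxz : sP k z = -(k:ℤ) := by rw [hval z]; split_ifs <;> omega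
            have e1 : blk L 0 z = some (o, a) := hbb z (by omega) (by omega)
            have e2 : blk L 0 (-(k:ℤ)) = some (o, a) := hbb _ (by omega) (by omega)
            refine ⟨by rw [hxz, e2, e1], fun o' a' hblk hneg => by rw [hxz]; omega⟩
          · have hxz : sP k z = z := by rw [hval z]; split_ifs <;> omega
            exact ⟨by rw [hxz], fun o' a' hblk hneg => by rw [hxz]⟩
  · -- tP generator
    set k := 0 + o + 1 with hkdef
    have hval := tP_apply k
    have hane : 1 ≤ a.natAbs := by omega
    refine ⟨by rw [hval 0]; split_ifs <;> omega, fun z => ?_⟩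
    by_cases h1 : z = (k:ℤ)
    · have hxz : tP k z = -(k:ℤ) := by rw [hval z]; split_ifs <;> omega
      have e1 : blk L 0 z = some (o, a) := hbb z (by omega) (by omega)
      have e2 : blk L 0 (-(k:ℤ)) = some (o, a) := hbb _ (by omega) (by omega)
      refine ⟨by rw [hxz, e2, e1], fun o' a' hblk hneg => ?_⟩
      rw [e1] at hblk
      simp only [Option.some.injEq, Prod.mk.injEq] at hblk
      omega
    · by_cases h2 : z = -(k:ℤ)
      · have hxz : tP k z = (k:ℤ) := by rw [hval z]; split_ifs <;> omega
        have e1 : blk L 0 z = some (o, a) := hbb z (by omega) (by omega)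
        have e2 : blk L 0 ((k:ℤ)) = some (o, a) := hbb _ (by omega) (by omega)
        refine ⟨by rw [hxz, e2, e1], fun o' a' hblk hneg => ?_⟩
        rw [e1] at hblk
        simp only [Option.some.injEq, Prod.mk.injEq] at hblk
        omega
      · have hxz : tP k z = z := by rw [hval z]; split_ifs <;> omega
        exact ⟨by rw [hxz], fun o' a' hblk hneg => by rw [hxz]⟩

lemma Esub_pow {L : List ℤ} {w : Q} (hw : w ∈ Esub L) (m : ℕ) (z : ℤ) :
    blk L 0 ((w ^ m) z) = blk L 0 z ∧
      (∀ o a, blk L 0 z = some (o, a) → a < 0 → (0 < z ↔ 0 < (w ^ m) z)) := by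
  induction m with
  | zero => exact ⟨by simp, fun _ _ _ _ => by simp⟩
  | succ m ih =>
    have hw' : Ecar L w := hw
    have hstep := hw'.2 ((w ^ m) z)
    have hpow : ∀ y, (w ^ (m+1)) y = w ((w ^ m) y) := by
      intro y; rw [pow_succ', Equiv.Perm.mul_apply]
    constructor
    · rw [hpow, hstep.1, ih.1]
    · intro o a hblk hneg
      have h1 := ih.2 o a hblk hneg
      have h2 := hstep.2 o a (by rw [ih.1]; exact hblk) hneg
      rw [hpow]
      exact h1.trans h2

/-! ### facts about `W n` -/

lemma W_equiv {n : ℕ} {w : Q} (hw : w ∈ W n) : ∀ z : ℤ, w (-z) = -(w z) := by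
  have : w ∈ {w : Q | (∀ i : ℤ, w (-i) = -(w i)) ∧ (∀ i : ℤ, (n : ℤ) < |i| → w i = i)} := hw
  exact this.1

lemma W_fix {n : ℕ} {w : Q} (hw : w ∈ W n) : ∀ z : ℤ, (n:ℤ) < |z| → w z = z := by
  have : w ∈ {w : Q | (∀ i : ℤ, w (-i) = -(w i)) ∧ (∀ i : ℤ, (n : ℤ) < |i| → w i = i)} := hw
  exact this.2

lemma W_zero {n : ℕ} {w : Q} (hw : w ∈ W n) : w 0 = 0 := by
  have := W_equiv hw 0
  rw [neg_zero] at this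
  omega

lemma W_natAbs {n : ℕ} {w : Q} (hw : w ∈ W n) {z : ℤ} (hz : z.natAbs ≤ n) :
    (w z).natAbs ≤ n := by
  by_contra h
  have h2 := W_fix hw (w z) (by rw [Int.abs_eq_natAbs]; omega)
  have := w.injective h2
  omega

instance W_finite (n : ℕ) : Finite (W n) := by
  have hfin : Set.Finite {z : ℤ | z.natAbs ≤ n} :=
    Set.Finite.subset (Set.finite_Icc (-(n:ℤ)) n) (by intro z hz; simp at hz ⊢; omega)
  haveI : Finite {z : ℤ // z.natAbs ≤ n} := hfin.to_subtype
  let f : W n → ({z : ℤ // z.natAbs ≤ n} → {z : ℤ // z.natAbs ≤ n}) :=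
    fun w z => ⟨w.1 z.1, W_natAbs w.2 z.2⟩
  have hf : Function.Injective f := by
    intro w1 w2 h
    apply Subtype.ext
    apply Equiv.ext
    intro z
    by_cases hz : z.natAbs ≤ n
    · have := congrFun h ⟨z, hz⟩
      exact Subtype.ext_iff.1 this
    · rw [W_fix w1.2 z (by rw [Int.abs_eq_natAbs]; omega),
        W_fix w2.2 z (by rw [Int.abs_eq_natAbs]; omega)]
  exact Finite.of_injective f hf

lemma sP_mem_W {n k : ℕ} (hk : 1 ≤ k) (hkn : k + 1 ≤ n) : sP k ∈ W n := by
  constructor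
  · exact sP_neg k hk
  · intro i hi
    rw [Int.abs_eq_natAbs] at hi
    rw [sP_apply k hk]; split_ifs <;> omega

lemma tP_mem_W {n k : ℕ} (hk : 1 ≤ k) (hkn : k ≤ n) : tP k ∈ W n := by
  constructor
  · exact tP_neg k
  · intro i hi
    rw [Int.abs_eq_natAbs] at hi
    rw [tP_apply k]; split_ifs <;> omega

lemma genList_mem_W {n off : ℕ} {L : List ℤ} (h : off + sumAbs L ≤ n) :
    ∀ x ∈ genList off L, x ∈ W n := by
  intro x hx
  obtain ⟨pre, a, suf, hL, hcase⟩ := mem_genList hx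
  have hsum : sumAbs pre + a.natAbs ≤ sumAbs L := by
    subst hL; rw [sumAbs_append, sumAbs_cons]; omega
  rcases hcase with ⟨j, hj1, hj2, rfl⟩ | ⟨ha, rfl⟩
  · exact sP_mem_W (by omega) (by omega)
  · exact tP_mem_W (by omega) (by omega)

lemma WL_le_W {n : ℕ} {L : List ℤ} (h : sumAbs L ≤ n) : WL L ≤ W n := by
  rw [WL, Subgroup.closure_le]
  exact fun x hx => genList_mem_W (by omega) x hx

lemma genList_fix_low {off : ℕ} {L : List ℤ} {x : Q} (hx : x ∈ genList off L) :
    ∀ z : ℤ, z.natAbs ≤ off → x z = z := by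
  intro z hz
  obtain ⟨pre, a, suf, hL, hcase⟩ := mem_genList hx
  rcases hcase with ⟨j, hj1, hj2, rfl⟩ | ⟨ha, rfl⟩
  · rw [sP_apply _ (by omega)]; split_ifs <;> omega
  · rw [tP_apply]; split_ifs <;> omega

lemma genList_fix_high {off : ℕ} {L : List ℤ} {x : Q} (hx : x ∈ genList off L) :
    ∀ z : ℤ, off + sumAbs L < z.natAbs → x z = z := by
  intro z hz
  obtain ⟨pre, a, suf, hL, hcase⟩ := mem_genList hx
  have hsum : sumAbs pre + a.natAbs ≤ sumAbs L := by
    subst hL; rw [sumAbs_append, sumAbs_cons]; omega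
  rcases hcase with ⟨j, hj1, hj2, rfl⟩ | ⟨ha, rfl⟩
  · rw [sP_apply _ (by omega)]; split_ifs <;> omega
  · rw [tP_apply]; split_ifs <;> omega

def cox' (L : List ℤ) : Q := (genList 0 L).prod

lemma cox_eq {n : ℕ} (A : SC n) : cox A = cox' A.1 := rfl

lemma list_prod_fix {P : List Q} {pred : ℤ → Prop}
    (h : ∀ x ∈ P, ∀ z, pred z → x z = z) {z : ℤ} (hz : pred z) : P.prod z = z := by
  induction P with
  | nil => simp
  | cons x P ih =>
    rw [List.prod_cons, Equiv.Perm.mul_apply,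
      ih (fun y hy => h y (List.mem_cons_of_mem x hy))]
    exact h x (List.mem_cons_self) z hz

lemma list_prod_neg {P : List Q} (h : ∀ x ∈ P, ∀ z : ℤ, x (-z) = -(x z)) (z : ℤ) :
    P.prod (-z) = -(P.prod z) := by
  induction P with
  | nil => simp
  | cons x P ih =>
    rw [List.prod_cons, Equiv.Perm.mul_apply, Equiv.Perm.mul_apply,
      ih (fun y hy => h y (List.mem_cons_of_mem x hy))]
    exact h x (List.mem_cons_self) _

def Sk (o k : ℕ) : Q := ((List.range k).map fun p => sP (o + p + 1)).prod

lemma Sk_fix (o k : ℕ) : ∀ z : ℤ, z.natAbs ≤ o ∨ o + k + 1 < z.natAbs → Sk o k z = z := by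
  intro z hz
  refine list_prod_fix (pred := fun z => z.natAbs ≤ o ∨ o + k + 1 < z.natAbs) ?_ hz
  intro x hx z' hz'
  obtain ⟨p, hp, rfl⟩ := List.mem_map.1 hx
  rw [List.mem_range] at hp
  rw [sP_apply _ (by omega)]; split_ifs <;> omega

lemma Sk_neg (o k : ℕ) (z : ℤ) : Sk o k (-z) = -(Sk o k z) := by
  refine list_prod_neg ?_ z
  intro x hx z'
  obtain ⟨p, hp, rfl⟩ := List.mem_map.1 hx
  exact sP_neg _ (by omega) z'

lemma Sk_mid (o : ℕ) : ∀ (k : ℕ) (j : ℕ), 1 ≤ j → j ≤ k → Sk o k ((o:ℤ) + j) = (o:ℤ) + j + 1 := by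
  intro k
  induction k with
  | zero => intro j h1 h2; omega
  | succ k ih =>
    intro j h1 h2
    have hsplit : Sk o (k+1) = Sk o k * sP (o + k + 1) := by
      rw [Sk, Sk, List.range_succ, List.map_append, List.prod_append]
      simp
    rw [hsplit, Equiv.Perm.mul_apply]
    by_cases hj : j ≤ k
    · have : sP (o + k + 1) ((o:ℤ) + j) = (o:ℤ) + j := by
        rw [sP_apply _ (by omega)]; split_ifs <;> omega
      rw [this, ih j h1 hj]
    · have hj' : j = k + 1 := by omega
      subst hj'
      have : sP (o + k + 1) ((o:ℤ) + (k+1:ℕ)) = (o:ℤ) + (k+1:ℕ) + 1 := by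
        rw [sP_apply _ (by omega)]; split_ifs <;> omega
      rw [this, Sk_fix o k _ (by right; simp; omega)]

lemma Sk_top (o : ℕ) : ∀ k : ℕ, Sk o k ((o:ℤ) + k + 1) = (o:ℤ) + 1 := by
  intro k
  induction k with
  | zero => simp [Sk]
  | succ k ih =>
    have hsplit : Sk o (k+1) = Sk o k * sP (o + k + 1) := by
      rw [Sk, Sk, List.range_succ, List.map_append, List.prod_append]
      simp
    rw [hsplit, Equiv.Perm.mul_apply]
    have : sP (o + k + 1) ((o:ℤ) + (k+1:ℕ) + 1) = (o:ℤ) + k + 1 := by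
      rw [sP_apply _ (by omega)]; split_ifs <;> omega
    rw [this, ih]

def Bp (o : ℕ) (a : ℤ) : Q := (genList o [a]).prod

lemma genList_single (o : ℕ) (a : ℤ) :
    genList o [a] = ((List.range (a.natAbs - 1)).map fun p => sP (o + p + 1))
      ++ (if 0 < a then [tP (o + 1)] else []) := by
  rw [genList_cons]
  simp [genList]

lemma Bp_eq (o : ℕ) (a : ℤ) :
    Bp o a = Sk o (a.natAbs - 1) * (if 0 < a then tP (o + 1) else 1) := by
  rw [Bp, genList_single, List.prod_append, Sk]
  congr 1
  split_ifs <;> simp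

lemma Bp_fix {o : ℕ} {a : ℤ} : ∀ z : ℤ, z.natAbs ≤ o ∨ o + a.natAbs < z.natAbs → Bp o a z = z := by
  intro z hz
  refine list_prod_fix (pred := fun z => z.natAbs ≤ o ∨ o + a.natAbs < z.natAbs) ?_ hz
  intro x hx z' hz'
  have h := genList_fix_low hx z'
  have h2 := genList_fix_high hx z'
  rcases hz' with h3 | h3
  · exact h h3
  · exact h2 (by simp; omega)

lemma Bp_neg {o : ℕ} {a : ℤ} (z : ℤ) : Bp o a (-z) = -(Bp o a z) := by
  refine list_prod_neg ?_ z
  intro x hx z'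
  rw [genList_single] at hx
  rcases List.mem_append.1 hx with h | h
  · obtain ⟨p, hp, rfl⟩ := List.mem_map.1 h
    exact sP_neg _ (by omega) z'
  · split at h
    · rcases List.mem_singleton.1 h with rfl
      exact tP_neg _ z'
    · simp at h

lemma Bp_range {o : ℕ} {a : ℤ} {z : ℤ} (h1 : o < z.natAbs) (h2 : z.natAbs ≤ o + a.natAbs) :
    o < (Bp o a z).natAbs ∧ (Bp o a z).natAbs ≤ o + a.natAbs := by
  by_contra h
  have hout : (Bp o a z).natAbs ≤ o ∨ o + a.natAbs < (Bp o a z).natAbs := by omega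
  have := Bp_fix _ hout
  have := (Bp o a).injective this
  omega

/-- the key reduction: on a block, `cox L` acts as the block product -/
lemma cox_block {L pre suf : List ℤ} {a : ℤ} {o : ℕ}
    (hL : L = pre ++ a :: suf) (ho : o = sumAbs pre) {z : ℤ}
    (h1 : o < z.natAbs) (h2 : z.natAbs ≤ o + a.natAbs) :
    cox' L z = Bp o a z := by
  have hdec : genList 0 L = genList 0 pre ++ (genList o [a] ++ genList (o + a.natAbs) suf) := by
    rw [hL, genList_append, genList_single, genList_cons, ho]
    rw [Nat.zero_add, List.append_assoc]
  rw [cox', hdec, List.prod_append, List.prod_append, Equiv.Perm.mul_apply,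
    Equiv.Perm.mul_apply]
  have hP2 : (genList (o + a.natAbs) suf).prod z = z :=
    list_prod_fix (pred := fun y => y.natAbs ≤ o + a.natAbs)
      (fun x hx y hy => genList_fix_low hx y hy) h2
  rw [hP2]
  have hrange := Bp_range h1 h2
  have hP1 : (genList 0 pre).prod (Bp o a z) = Bp o a z :=
    list_prod_fix (pred := fun y => o < y.natAbs)
      (fun x hx y hy => genList_fix_high hx y (by rw [← ho] at *; omega)) hrange.1
  rw [← Bp] at *
  exact hP1

lemma cox_block_pow {L pre suf : List ℤ} {a : ℤ} {o : ℕ}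
    (hL : L = pre ++ a :: suf) (ho : o = sumAbs pre) (m : ℕ) {z : ℤ}
    (h1 : o < z.natAbs) (h2 : z.natAbs ≤ o + a.natAbs) :
    ((cox' L) ^ m) z = ((Bp o a) ^ m) z := by
  induction m with
  | zero => simp
  | succ m ih =>
    have hr : ∀ m : ℕ, o < (((Bp o a) ^ m) z).natAbs ∧ (((Bp o a) ^ m) z).natAbs ≤ o + a.natAbs := by
      intro m
      induction m with
      | zero => simpa using ⟨h1, h2⟩
      | succ m ihm =>
        have : ((Bp o a) ^ (m+1)) z = Bp o a (((Bp o a) ^ m) z) := by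
          rw [pow_succ', Equiv.Perm.mul_apply]
        rw [this]
        exact Bp_range ihm.1 ihm.2
    rw [pow_succ', pow_succ', Equiv.Perm.mul_apply, Equiv.Perm.mul_apply, ih]
    exact cox_block hL ho (hr m).1 (hr m).2

lemma Bp_cyc_neg {o : ℕ} {a : ℤ} (ha : a < 0) {p : ℤ} (hp1 : (o:ℤ) < p)
    (hp2 : p ≤ (o:ℤ) + a.natAbs - 1) : Bp o a p = p + 1 := by
  rw [Bp_eq, if_neg (by omega), mul_one]
  have := Sk_mid o (a.natAbs - 1) (p - o).toNat (by omega) (by omega)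
  rw [show (o:ℤ) + (p - o).toNat = p by omega] at this
  rw [this]

lemma Bp_cyc_pos_mid {o : ℕ} {a : ℤ} (ha : 0 < a) {p : ℤ} (hp1 : (o:ℤ) + 2 ≤ p)
    (hp2 : p ≤ (o:ℤ) + a.natAbs - 1) : Bp o a p = p + 1 := by
  rw [Bp_eq, if_pos ha, Equiv.Perm.mul_apply]
  have ht : tP (o + 1) p = p := by rw [tP_apply]; split_ifs <;> omega
  rw [ht]
  have := Sk_mid o (a.natAbs - 1) (p - o).toNat (by omega) (by omega)
  rw [show (o:ℤ) + (p - o).toNat = p by omega] at this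
  rw [this]

lemma Bp_cyc_pos_top {o : ℕ} {a : ℤ} (ha : 2 ≤ a) :
    Bp o a ((o:ℤ) + a.natAbs) = (o:ℤ) + 1 := by
  rw [Bp_eq, if_pos (by omega), Equiv.Perm.mul_apply]
  have ht : tP (o + 1) ((o:ℤ) + a.natAbs) = (o:ℤ) + a.natAbs := by
    rw [tP_apply]; split_ifs <;> omega
  rw [ht]
  have := Sk_top o (a.natAbs - 1)
  rw [show (o:ℤ) + (a.natAbs - 1 : ℕ) + 1 = (o:ℤ) + a.natAbs by omega] at this
  rw [this]

lemma Bp_cyc_pos_one {o : ℕ} {a : ℤ} (ha : 2 ≤ a) :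
    Bp o a ((o:ℤ) + 1) = -((o:ℤ) + 2) := by
  rw [Bp_eq, if_pos (by omega), Equiv.Perm.mul_apply]
  have ht : tP (o + 1) ((o:ℤ) + 1) = -((o:ℤ) + 1) := by
    rw [tP_apply]; split_ifs <;> omega
  rw [ht, Sk_neg]
  have := Sk_mid o (a.natAbs - 1) 1 (by omega) (by omega)
  rw [show (o:ℤ) + (1:ℕ) = (o:ℤ) + 1 by omega] at this
  rw [this]
  omega

lemma Bp_pow_neg_orbit {o : ℕ} {a : ℤ} (ha : 2 ≤ a) :
    ∀ k : ℕ, 1 ≤ k → (k:ℤ) ≤ a - 1 → ((Bp o a) ^ k) ((o:ℤ) + 1) = -((o:ℤ) + 1 + k) := by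
  intro k
  induction k with
  | zero => omega
  | succ k ih =>
    intro h1 h2
    by_cases hk : k = 0
    · subst hk
      rw [pow_one, Bp_cyc_pos_one ha]
      push_cast; ring
    · have : ((Bp o a) ^ (k+1)) ((o:ℤ)+1) = Bp o a (((Bp o a) ^ k) ((o:ℤ)+1)) := by
        rw [pow_succ', Equiv.Perm.mul_apply]
      rw [this, ih (by omega) (by omega), Bp_neg,
        Bp_cyc_pos_mid (by omega) (by omega) (by omega)]
      push_cast
      ring

lemma Bp_selfneg {o : ℕ} {a : ℤ} (ha : 0 < a) :
    ∃ m : ℕ, ((Bp o a) ^ m) ((o:ℤ) + 1) = -((o:ℤ) + 1) := by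
  by_cases ha2 : a = 1
  · refine ⟨1, ?_⟩
    subst ha2
    rw [pow_one, Bp_eq, if_pos (by omega), Equiv.Perm.mul_apply]
    have ht : tP (o + 1) ((o:ℤ) + 1) = -((o:ℤ) + 1) := by
      rw [tP_apply]; split_ifs <;> omega
    rw [ht, show (1:ℤ).natAbs - 1 = 0 from rfl, Sk]
    simp
  · have ha2 : 2 ≤ a := by omega
    refine ⟨a.toNat, ?_⟩
    obtain ⟨b, hb⟩ : ∃ b : ℕ, a.toNat = b + 1 := ⟨a.toNat - 1, by omega⟩
    rw [hb, pow_succ', Equiv.Perm.mul_apply,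
      Bp_pow_neg_orbit ha2 b (by omega) (by omega), Bp_neg,
      show (o:ℤ) + 1 + (b:ℕ) = (o:ℤ) + a.natAbs by omega, Bp_cyc_pos_top ha2]

lemma Bp_succ_orbit {o : ℕ} {a : ℤ} (ha : a ≠ 0) {p : ℤ} (hp1 : (o:ℤ) < p)
    (hp2 : p ≤ (o:ℤ) + a.natAbs - 1) : ∃ m : ℕ, ((Bp o a) ^ m) p = p + 1 := by
  rcases lt_or_gt_of_ne ha with hneg | hpos
  · exact ⟨1, by rw [pow_one]; exact Bp_cyc_neg hneg hp1 hp2⟩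
  · by_cases hp : (o:ℤ) + 2 ≤ p
    · exact ⟨1, by rw [pow_one]; exact Bp_cyc_pos_mid hpos hp hp2⟩
    · have hp' : p = (o:ℤ) + 1 := by omega
      subst hp'
      have ha2 : 2 ≤ a := by omega
      refine ⟨a.toNat + 1, ?_⟩
      have hsplit : ((Bp o a) ^ (a.toNat + 1)) ((o:ℤ)+1)
          = Bp o a (((Bp o a) ^ a.toNat) ((o:ℤ)+1)) := by
        rw [pow_succ', Equiv.Perm.mul_apply]
      have hsn : ((Bp o a) ^ a.toNat) ((o:ℤ)+1) = -((o:ℤ)+1) := by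
        obtain ⟨b, hb⟩ : ∃ b : ℕ, a.toNat = b + 1 := ⟨a.toNat - 1, by omega⟩
        rw [hb, pow_succ', Equiv.Perm.mul_apply,
          Bp_pow_neg_orbit ha2 b (by omega) (by omega), Bp_neg,
          show (o:ℤ) + 1 + (b:ℕ) = (o:ℤ) + a.natAbs by omega, Bp_cyc_pos_top ha2]
      rw [hsplit, hsn, Bp_neg, Bp_cyc_pos_one ha2]
      ring

/-- cycle facts for the full Coxeter element -/
lemma cox_cyc_s {L pre suf : List ℤ} {a : ℤ} {o : ℕ}
    (hL : L = pre ++ a :: suf) (ho : o = sumAbs pre) (ha : a ≠ 0) {p : ℤ}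
    (hp1 : (o:ℤ) < p) (hp2 : p ≤ (o:ℤ) + a.natAbs - 1) :
    ∃ m : ℕ, ((cox' L) ^ m) p = p + 1 := by
  obtain ⟨m, hm⟩ := Bp_succ_orbit ha hp1 hp2
  exact ⟨m, by rw [cox_block_pow hL ho m (by omega) (by omega)]; exact hm⟩

lemma cox_cyc_t {L pre suf : List ℤ} {a : ℤ} {o : ℕ}
    (hL : L = pre ++ a :: suf) (ho : o = sumAbs pre) (ha : 0 < a) :
    ∃ m : ℕ, ((cox' L) ^ m) ((o:ℤ) + 1) = -((o:ℤ) + 1) := by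
  obtain ⟨m, hm⟩ := Bp_selfneg (o := o) ha
  exact ⟨m, by rw [cox_block_pow hL ho m (by omega) (by omega)]; exact hm⟩

lemma conj_pow_perm (x c : Q) (m : ℕ) : (x⁻¹ * c * x) ^ m = x⁻¹ * c ^ m * x := by
  induction m with
  | zero => simp
  | succ m ih => rw [pow_succ, pow_succ, ih]; group

lemma conj_gen_mem_WL {n : ℕ} (lam mu : SC n) {x : Q} (hx : x ∈ W n)
    (hw : x⁻¹ * cox' mu.1 * x ∈ WL lam.1) :
    ∀ s ∈ genList 0 mu.1, x⁻¹ * s * x ∈ WL lam.1 := by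
  intro s hs
  set c := cox' mu.1 with hc
  set w := x⁻¹ * c * x with hwdef
  have hsum_mu : sumAbs mu.1 = n := mu.2.2
  have hsum_lam : sumAbs lam.1 = n := lam.2.2
  have hwE : w ∈ Esub lam.1 := WL_le_Esub lam.1 hw
  have hxinv : (x⁻¹ : Q) ∈ W n := inv_mem hx
  have hxe : ∀ z : ℤ, x (-z) = -(x z) := W_equiv hx
  have hxie : ∀ z : ℤ, x⁻¹ (-z) = -(x⁻¹ z) := W_equiv hxinv
  have hx0 : x⁻¹ (0:ℤ) = 0 := W_zero hxinv
  -- common facts for a point 1 ≤ q ≤ n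
  have hfacts : ∀ q : ℤ, 0 < q → q.natAbs ≤ n →
      0 < (x⁻¹ q).natAbs ∧ (x⁻¹ q).natAbs ≤ n := by
    intro q hq hqn
    constructor
    · by_contra h
      have : x⁻¹ q = 0 := by omega
      rw [← hx0] at this
      have := x⁻¹.injective this
      omega
    · exact W_natAbs hxinv hqn
  obtain ⟨pre, a, suf, hM, hcase⟩ := mem_genList hs
  have ha : a ≠ 0 := mu.2.1 a (by
    rw [hM]; exact List.mem_append.2 (Or.inr (List.mem_cons_self)))
  have hblocksum : sumAbs pre + a.natAbs ≤ n := by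
    rw [hM, sumAbs_append, sumAbs_cons] at hsum_mu; omega
  set o := sumAbs pre with hodef
  have hwpow : ∀ (m : ℕ) (z : ℤ), (w ^ m) (x⁻¹ z) = x⁻¹ ((c ^ m) z) := by
    intro m z
    rw [hwdef, conj_pow_perm]
    simp [Equiv.Perm.mul_apply]
  rcases hcase with ⟨j, hj1, hj2, rfl⟩ | ⟨hapos, rfl⟩
  · -- the generator sP (o + j)
    set k := 0 + o + j with hkdef
    set q : ℤ := (k : ℤ) with hqdef
    have hq1 : (o:ℤ) < q := by omega
    have hq2 : q ≤ (o:ℤ) + a.natAbs - 1 := by omega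
    obtain ⟨m, hm⟩ := cox_cyc_s hM hodef ha hq1 hq2
    set u := x⁻¹ q with hudef
    set v := x⁻¹ (q + 1) with hvdef
    have horb : (w ^ m) u = v := by rw [hudef, hwpow m q, hm]
    have hu := hfacts q (by omega) (by omega)
    have hv := hfacts (q + 1) (by omega) (by omega)
    have hne : u.natAbs ≠ v.natAbs := by
      intro h
      have : u = v ∨ u = -v := by omega
      rcases this with h' | h'
      · have := x⁻¹.injective (show x⁻¹ q = x⁻¹ (q+1) from h')
        omega
      · rw [hvdef, ← hxie] at h'
        have := x⁻¹.injective h'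
        omega
    obtain ⟨o', b, hb⟩ : ∃ o' b, blk lam.1 0 u = some (o', b) :=
      blk_total (by omega) (by omega)
    obtain ⟨⟨pre', suf', hL', ho'⟩, hbu1, hbu2⟩ := blk_sound (by omega) hb
    have hbv : blk lam.1 0 v = some (o', b) := by
      rw [← horb, (Esub_pow hwE m u).1, hb]
    obtain ⟨_, hbv1, hbv2⟩ := blk_sound (off := 0) (by omega) hbv
    have hb0 : b ≠ 0 := lam.2.1 b (by
      rw [hL']; exact List.mem_append.2 (Or.inr (List.mem_cons_self)))
    have hsgn : b < 0 → (0 < u ↔ 0 < v) := by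
      intro hbneg
      have := (Esub_pow hwE m u).2 o' b hb hbneg
      rw [horb] at this
      exact this
    have hconj : x⁻¹ * sP k * x = swapP u v := by
      rw [sP_eq_swapP, conj_swapP x hxe]
    rw [hconj]
    exact blkSub_le_WL hL' (by omega)
      (swapP_mem_blk hbu1 hbu2 hbv1 hbv2 hne hsgn hb0)
  · -- the generator tP (o + 1)
    set k := 0 + o + 1 with hkdef
    set q : ℤ := (k : ℤ) with hqdef
    obtain ⟨m, hm⟩ := cox_cyc_t hM hodef hapos
    have hmq : (c ^ m) q = -q := by
      have : q = (o:ℤ) + 1 := by omega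
      rw [this]; exact hm
    set u := x⁻¹ q with hudef
    have horb : (w ^ m) u = -u := by
      rw [hudef, hwpow m q, hmq, hxie]
    have hu := hfacts q (by omega) (by omega)
    obtain ⟨o', b, hb⟩ : ∃ o' b, blk lam.1 0 u = some (o', b) :=
      blk_total (by omega) (by omega)
    obtain ⟨⟨pre', suf', hL', ho'⟩, hbu1, hbu2⟩ := blk_sound (by omega) hb
    have hb0 : b ≠ 0 := lam.2.1 b (by
      rw [hL']; exact List.mem_append.2 (Or.inr (List.mem_cons_self)))
    have hbpos : 0 < b := by
      rcases lt_or_gt_of_ne hb0 with hneg | hpos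
      · exfalso
        have := (Esub_pow hwE m u).2 o' b hb hneg
        rw [horb] at this
        omega
      · exact hpos
    have hconj : x⁻¹ * tP k * x = Equiv.swap u (-u) := by
      rw [tP_eq_swap, conj_swap, hxie]
    rw [hconj]
    exact blkSub_le_WL hL' (by omega) (tswap_mem' o' b hbpos hbu1 hbu2)

lemma key {n : ℕ} (lam mu : SC n) {x : Q} (hx : x ∈ W n)
    (hw : x⁻¹ * cox' mu.1 * x ∈ WL lam.1) :
    ∀ y ∈ WL mu.1, x⁻¹ * y * x ∈ WL lam.1 := by
  have hle : WL mu.1 ≤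
      Subgroup.comap ((MulAut.conj (x⁻¹ : Q)).toMonoidHom) (WL lam.1) := by
    rw [WL, Subgroup.closure_le]
    intro s hs
    have h := conj_gen_mem_WL lam mu hx hw s hs
    simp only [Set.mem_preimage, SetLike.mem_coe, Subgroup.mem_comap,
      MulEquiv.coe_toMonoidHom, MulAut.conj_apply, inv_inv]
    exact h
  intro y hy
  have := hle hy
  simp only [Subgroup.mem_comap, MulEquiv.coe_toMonoidHom, MulAut.conj_apply, inv_inv] at this
  exact this

def posOrb (H : Subgroup Q) (i : ℤ) : Set ℤ := {j | 0 < j ∧ ∃ h ∈ H, h i = j ∨ h i = -j}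

def selfNeg (H : Subgroup Q) (i : ℤ) : Prop := ∃ h ∈ H, h i = -i

lemma posOrb_WL {L : List ℤ} (hL0 : ∀ a ∈ L, a ≠ 0) {i : ℤ} {o : ℕ} {a : ℤ}
    (hi : 0 < i) (hb : blk L 0 i = some (o, a)) :
    posOrb (WL L) i = {j : ℤ | (o:ℤ) < j ∧ j ≤ (o:ℤ) + a.natAbs} := by
  obtain ⟨⟨pre, suf, hL, ho⟩, hi1, hi2⟩ := blk_sound (by omega) hb
  have ha0 : a ≠ 0 := hL0 a (by
    rw [hL]; exact List.mem_append.2 (Or.inr (List.mem_cons_self)))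
  ext j
  constructor
  · rintro ⟨hj, h, hH, hval⟩
    have hE : h ∈ Esub L := WL_le_Esub L hH
    have hblk : blk L 0 (h i) = some (o, a) := by rw [(hE.2 i).1, hb]
    have hblkj : blk L 0 j = some (o, a) := by
      rcases hval with rfl | hneg
      · exact hblk
      · rw [← blk_neg L 0 j, ← hneg, hblk]
    obtain ⟨_, h1, h2⟩ := blk_sound (off := 0) (by omega) hblkj
    constructor <;> omega
  · rintro ⟨hj1, hj2⟩
    by_cases hij : j = i
    · exact ⟨by omega, 1, one_mem _, Or.inl (by simp [hij])⟩
    · refine ⟨by omega, swapP i j, ?_, Or.inl ?_⟩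
      · have hsw : swapP i j ∈ blkSub o a :=
          swapP_mem_blk (by omega) (by omega) (by omega) (by omega) (by omega)
            (fun _ => by omega) ha0
        exact blkSub_le_WL hL (by omega) hsw
      · rw [swapP_apply i j (by omega) (by omega) (by omega)]
        split_ifs <;> omega

lemma selfNeg_WL {L : List ℤ} (hL0 : ∀ a ∈ L, a ≠ 0) {i : ℤ} {o : ℕ} {a : ℤ}
    (hi : 0 < i) (hb : blk L 0 i = some (o, a)) :
    selfNeg (WL L) i ↔ 0 < a := by
  obtain ⟨⟨pre, suf, hL, ho⟩, hi1, hi2⟩ := blk_sound (by omega) hb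
  have ha0 : a ≠ 0 := hL0 a (by
    rw [hL]; exact List.mem_append.2 (Or.inr (List.mem_cons_self)))
  constructor
  · rintro ⟨h, hH, hval⟩
    have hE : h ∈ Esub L := WL_le_Esub L hH
    by_contra hneg
    have haneg : a < 0 := by omega
    have := (hE.2 i).2 o a hb haneg
    rw [hval] at this
    omega
  · intro hapos
    refine ⟨Equiv.swap i (-i), ?_, ?_⟩
    · exact blkSub_le_WL hL (by omega) (tswap_mem' o a hapos (by omega) (by omega))
    · exact Equiv.swap_apply_left i (-i)

/-! ### counting -/

noncomputable def Npos (n : ℕ) (H : Subgroup Q) (m : ℕ) : ℕ :=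
  ((Finset.Ioc (0:ℤ) (n:ℤ)).filter
    (fun i => selfNeg H i ∧ (posOrb H i).ncard = m)).card

noncomputable def Nneg (n : ℕ) (H : Subgroup Q) (m : ℕ) : ℕ :=
  ((Finset.Ioc (0:ℤ) (n:ℤ)).filter
    (fun i => ¬selfNeg H i ∧ (posOrb H i).ncard = m)).card

noncomputable def wt (pa : ℤ → Prop) (a : ℤ) : ℕ := if pa a then a.natAbs else 0

lemma wt_pos {pa : ℤ → Prop} {a : ℤ} (h : pa a) : wt pa a = a.natAbs := if_pos h
lemma wt_zero {pa : ℤ → Prop} {a : ℤ} (h : ¬ pa a) : wt pa a = 0 := if_neg h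

lemma blk_count (pa : ℤ → Prop) : ∀ (L : List ℤ) (off : ℕ),
    ((Finset.Ioc ((off:ℕ):ℤ) ((off + sumAbs L : ℕ):ℤ)).filter
      (fun i => ∃ o a, blk L off i = some (o, a) ∧ pa a)).card
      = (L.map (wt pa)).sum := by
  intro L
  induction L with
  | nil => intro off; simp
  | cons a rest ih =>
    intro off
    have hle1 : ((off:ℕ):ℤ) ≤ ((off + a.natAbs : ℕ):ℤ) := by omega
    have hle2 : ((off + a.natAbs : ℕ):ℤ) ≤ ((off + sumAbs (a :: rest) : ℕ):ℤ) := by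
      rw [sumAbs_cons]; omega
    have hsplit : Finset.Ioc ((off:ℕ):ℤ) ((off + sumAbs (a :: rest) : ℕ):ℤ)
        = Finset.Ioc ((off:ℕ):ℤ) ((off + a.natAbs : ℕ):ℤ)
          ∪ Finset.Ioc ((off + a.natAbs : ℕ):ℤ) ((off + sumAbs (a :: rest) : ℕ):ℤ) :=
      (Finset.Ioc_union_Ioc_eq_Ioc hle1 hle2).symm
    have hdisj : Disjoint
        ((Finset.Ioc ((off:ℕ):ℤ) ((off + a.natAbs : ℕ):ℤ)).filter
          (fun i => ∃ o b, blk (a :: rest) off i = some (o, b) ∧ pa b))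
        ((Finset.Ioc ((off + a.natAbs : ℕ):ℤ) ((off + sumAbs (a :: rest) : ℕ):ℤ)).filter
          (fun i => ∃ o b, blk (a :: rest) off i = some (o, b) ∧ pa b)) := by
      rw [Finset.disjoint_left]
      intro i h1 h2
      rw [Finset.mem_filter, Finset.mem_Ioc] at h1 h2
      obtain ⟨⟨ha1, ha2⟩, -⟩ := h1
      obtain ⟨⟨hb1, hb2⟩, -⟩ := h2
      omega
    rw [hsplit, Finset.filter_union, Finset.card_union_of_disjoint hdisj]
    have hpart1 : ((Finset.Ioc ((off:ℕ):ℤ) ((off + a.natAbs : ℕ):ℤ)).filter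
        (fun i => ∃ o b, blk (a :: rest) off i = some (o, b) ∧ pa b)).card
        = wt pa a := by
      have hcongr : ∀ i ∈ Finset.Ioc ((off:ℕ):ℤ) ((off + a.natAbs : ℕ):ℤ),
          (∃ o b, blk (a :: rest) off i = some (o, b) ∧ pa b) ↔ pa a := by
        intro i hi
        rw [Finset.mem_Ioc] at hi
        have hbi : blk (a :: rest) off i = some (off, a) := by
          obtain ⟨hiA, hiB⟩ := hi
          rw [blk_cons, if_pos (by omega)]
        constructor
        · rintro ⟨o', b', he, hpa⟩
          rw [hbi] at he
          simp only [Option.some.injEq, Prod.mk.injEq] at he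
          rw [he.2]; exact hpa
        · intro hpa; exact ⟨off, a, hbi, hpa⟩
      rw [Finset.filter_congr hcongr]
      by_cases h : pa a
      · rw [Finset.filter_true_of_mem (fun _ _ => h), Int.card_Ioc, wt_pos h]
        omega
      · rw [Finset.filter_false_of_mem (fun _ _ => h), Finset.card_empty, wt_zero h]
    have hpart2 : ((Finset.Ioc ((off + a.natAbs : ℕ):ℤ) ((off + sumAbs (a :: rest) : ℕ):ℤ)).filter
        (fun i => ∃ o b, blk (a :: rest) off i = some (o, b) ∧ pa b)).card
        = (rest.map (wt pa)).sum := by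
      have hcongr : ∀ i ∈ Finset.Ioc ((off + a.natAbs : ℕ):ℤ) ((off + sumAbs (a :: rest) : ℕ):ℤ),
          (∃ o b, blk (a :: rest) off i = some (o, b) ∧ pa b)
            ↔ (∃ o b, blk rest (off + a.natAbs) i = some (o, b) ∧ pa b) := by
        intro i hi
        rw [Finset.mem_Ioc] at hi
        obtain ⟨hiA, hiB⟩ := hi
        rw [blk_cons, if_neg (by omega)]
      rw [Finset.filter_congr hcongr]
      have := ih (off + a.natAbs)
      rw [show off + a.natAbs + sumAbs rest = off + sumAbs (a :: rest) by rw [sumAbs_cons]; omega] at this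
      exact this
    rw [hpart1, hpart2, List.map_cons, List.sum_cons]

lemma Npos_WL {n : ℕ} {L : List ℤ} (hL0 : ∀ a ∈ L, a ≠ 0) (hsum : sumAbs L = n) (m : ℕ) :
    Npos n (WL L) m = (L.map (wt (fun a => 0 < a ∧ a.natAbs = m))).sum := by
  rw [Npos]
  have hcongr : ∀ i ∈ Finset.Ioc (0:ℤ) (n:ℤ),
      (selfNeg (WL L) i ∧ (posOrb (WL L) i).ncard = m)
        ↔ (∃ o a, blk L 0 i = some (o, a) ∧ (0 < a ∧ a.natAbs = m)) := by
    intro i hi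
    rw [Finset.mem_Ioc] at hi
    obtain ⟨hiA, hiB⟩ := hi
    obtain ⟨o, a, hb⟩ := blk_total (L := L) (off := 0) (z := i) (by omega) (by omega)
    have horb := posOrb_WL hL0 hiA hb
    have hsn := selfNeg_WL hL0 hiA hb
    have hncard : (posOrb (WL L) i).ncard = a.natAbs := by
      rw [horb]
      have : {j : ℤ | (o:ℤ) < j ∧ j ≤ (o:ℤ) + a.natAbs}
          = ↑(Finset.Ioc (o:ℤ) ((o:ℤ) + a.natAbs)) := by
        ext j; simp [Finset.mem_Ioc]
      rw [this, Set.ncard_coe_finset, Int.card_Ioc]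
      omega
    constructor
    · rintro ⟨h1, h2⟩
      exact ⟨o, a, hb, hsn.1 h1, by omega⟩
    · rintro ⟨o', a', hb', hpa⟩
      rw [hb] at hb'
      simp only [Option.some.injEq, Prod.mk.injEq] at hb'
      obtain ⟨rfl, rfl⟩ : o' = o ∧ a' = a := ⟨hb'.1.symm, hb'.2.symm⟩
      exact ⟨hsn.2 hpa.1, by omega⟩
  rw [Finset.filter_congr hcongr]
  have := blk_count (fun a => 0 < a ∧ a.natAbs = m) L 0
  rw [Nat.zero_add, hsum] at this
  rw [show ((0:ℕ):ℤ) = (0:ℤ) by norm_num] at this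
  exact this

lemma Nneg_WL {n : ℕ} {L : List ℤ} (hL0 : ∀ a ∈ L, a ≠ 0) (hsum : sumAbs L = n) (m : ℕ) :
    Nneg n (WL L) m = (L.map (wt (fun a => a < 0 ∧ a.natAbs = m))).sum := by
  rw [Nneg]
  have hcongr : ∀ i ∈ Finset.Ioc (0:ℤ) (n:ℤ),
      (¬selfNeg (WL L) i ∧ (posOrb (WL L) i).ncard = m)
        ↔ (∃ o a, blk L 0 i = some (o, a) ∧ (a < 0 ∧ a.natAbs = m)) := by
    intro i hi
    rw [Finset.mem_Ioc] at hi
    obtain ⟨hiA, hiB⟩ := hi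
    obtain ⟨o, a, hb⟩ := blk_total (L := L) (off := 0) (z := i) (by omega) (by omega)
    obtain ⟨⟨pre, suf, hLd, ho⟩, hi1, hi2⟩ := blk_sound (by omega) hb
    have ha0 : a ≠ 0 := hL0 a (by
      rw [hLd]; exact List.mem_append.2 (Or.inr (List.mem_cons_self)))
    have horb := posOrb_WL hL0 hiA hb
    have hsn := selfNeg_WL hL0 hiA hb
    have hncard : (posOrb (WL L) i).ncard = a.natAbs := by
      rw [horb]
      have : {j : ℤ | (o:ℤ) < j ∧ j ≤ (o:ℤ) + a.natAbs}
          = ↑(Finset.Ioc (o:ℤ) ((o:ℤ) + a.natAbs)) := by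
        ext j; simp [Finset.mem_Ioc]
      rw [this, Set.ncard_coe_finset, Int.card_Ioc]
      omega
    constructor
    · rintro ⟨h1, h2⟩
      refine ⟨o, a, hb, ?_, by omega⟩
      by_contra h
      exact h1 (hsn.2 (by omega))
    · rintro ⟨o', a', hb', hpa⟩
      rw [hb] at hb'
      simp only [Option.some.injEq, Prod.mk.injEq] at hb'
      obtain ⟨rfl, rfl⟩ : o' = o ∧ a' = a := ⟨hb'.1.symm, hb'.2.symm⟩
      refine ⟨fun h => ?_, by omega⟩
      have := hsn.1 h
      omega
  rw [Finset.filter_congr hcongr]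
  have := blk_count (fun a => a < 0 ∧ a.natAbs = m) L 0
  rw [Nat.zero_add, hsum] at this
  rw [show ((0:ℕ):ℤ) = (0:ℤ) by norm_num] at this
  exact this

lemma filter_irrel {α : Type*} (p : α → Prop) (i1 i2 : DecidablePred p) (s : Finset α) :
    @Finset.filter α p i1 s = @Finset.filter α p i2 s := by
  apply Finset.ext
  intro a
  simp only [Finset.mem_filter]

lemma N_conj {n : ℕ} (cond : Prop → Prop) (H K : Subgroup Q) (hH : H ≤ W n) (hK : K ≤ W n)
    {g : Q} (hg : g ∈ W n)
    (hcorr : ∀ y : Q, y ∈ H ↔ g⁻¹ * y * g ∈ K) (m : ℕ) :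
    ((Finset.Ioc (0:ℤ) (n:ℤ)).filter
      (fun i => cond (selfNeg H i) ∧ (posOrb H i).ncard = m)).card
    = ((Finset.Ioc (0:ℤ) (n:ℤ)).filter
      (fun i => cond (selfNeg K i) ∧ (posOrb K i).ncard = m)).card := by
  have hgi : (g⁻¹ : Q) ∈ W n := inv_mem hg
  have hge : ∀ z : ℤ, g (-z) = -(g z) := W_equiv hg
  have hgie : ∀ z : ℤ, g⁻¹ (-z) = -(g⁻¹ z) := W_equiv hgi
  have hg0 : g (0:ℤ) = 0 := W_zero hg
  have hgi0 : g⁻¹ (0:ℤ) = 0 := W_zero hgi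
  set ψ : ℤ → ℤ := fun z => ((g⁻¹ z).natAbs : ℤ) with hψ
  have hne0 : ∀ i : ℤ, i ≠ 0 → g⁻¹ i ≠ 0 := by
    intro i hi h
    rw [← hgi0] at h
    exact hi (g⁻¹.injective h)
  have hne0' : ∀ i : ℤ, i ≠ 0 → g i ≠ 0 := by
    intro i hi h
    rw [← hg0] at h
    exact hi (g.injective h)
  -- membership transfer
  have hmemK : ∀ h : Q, h ∈ H → g⁻¹ * h * g ∈ K := fun h hh => (hcorr h).1 hh
  have hmemH : ∀ k : Q, k ∈ K → g * k * g⁻¹ ∈ H := by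
    intro k hk
    have : g⁻¹ * (g * k * g⁻¹) * g = k := by group
    exact (hcorr (g * k * g⁻¹)).2 (by rw [this]; exact hk)
  -- selfNeg transfer
  have hsn : ∀ i : ℤ, i ≠ 0 → (selfNeg H i ↔ selfNeg K (ψ i)) := by
    intro i hi
    constructor
    · rintro ⟨h, hh, hval⟩
      refine ⟨g⁻¹ * h * g, hmemK h hh, ?_⟩
      have hkz : (g⁻¹ * h * g) (g⁻¹ i) = -(g⁻¹ i) := by
        simp only [Equiv.Perm.mul_apply, Equiv.Perm.apply_inv_self]
        rw [hval, hgie]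
      rcases le_or_gt 0 (g⁻¹ i) with hz | hz
      · rw [show ψ i = g⁻¹ i by simp only [hψ]; omega]
        exact hkz
      · rw [show ψ i = -(g⁻¹ i) by simp only [hψ]; omega]
        rw [W_equiv (hK (hmemK h hh)), hkz, neg_neg]
    · rintro ⟨k, hk, hval⟩
      refine ⟨g * k * g⁻¹, hmemH k hk, ?_⟩
      have hkz : k (g⁻¹ i) = -(g⁻¹ i) := by
        rcases le_or_gt 0 (g⁻¹ i) with hz | hz
        · rw [show ψ i = g⁻¹ i by simp only [hψ]; omega] at hval
          exact hval
        · have h1 : ψ i = -(g⁻¹ i) := by simp only [hψ]; omega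
          have := hval
          rw [h1, W_equiv (hK hk)] at this
          omega
      simp only [Equiv.Perm.mul_apply]
      rw [hkz, hge, Equiv.Perm.apply_inv_self]
  -- posOrb transfer
  have horb : ∀ i : ℤ, i ≠ 0 → posOrb K (ψ i) = ψ '' posOrb H i := by
    intro i hi
    ext j'
    constructor
    · rintro ⟨hj', k, hk, hval⟩
      set y := g * k * g⁻¹ with hy
      have hyH : y ∈ H := hmemH k hk
      have hkgi : k (g⁻¹ i) = j' ∨ k (g⁻¹ i) = -j' := by
        rcases le_or_gt 0 (g⁻¹ i) with hz | hz
        · rw [show (g⁻¹ i) = ψ i by simp only [hψ]; omega]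
          exact hval
        · have h1 : (g⁻¹ i) = -(ψ i) := by simp only [hψ]; omega
          rw [h1, W_equiv (hK hk)]
          omega
      have hyi : y i = g j' ∨ y i = -(g j') := by
        have : y i = g (k (g⁻¹ i)) := by simp [hy, Equiv.Perm.mul_apply]
        rcases hkgi with h | h
        · left; rw [this, h]
        · right; rw [this, h, hge]
      refine ⟨((g j').natAbs : ℤ), ⟨?_, y, hyH, ?_⟩, ?_⟩
      · have := hne0' j' (by omega)
        omega
      · rcases hyi with h | h
        · rcases le_or_gt 0 (g j') with hz | hz
          · left; rw [show ((g j').natAbs : ℤ) = g j' by omega]; exact h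
          · right; rw [show ((g j').natAbs : ℤ) = -(g j') by omega, neg_neg]; exact h
        · rcases le_or_gt 0 (g j') with hz | hz
          · right; rw [show ((g j').natAbs : ℤ) = g j' by omega]; exact h
          · left; rw [show ((g j').natAbs : ℤ) = -(g j') by omega]; exact h
      · show ψ _ = j'
        simp only [hψ]
        rcases le_or_gt 0 (g j') with hz | hz
        · rw [show ((g j').natAbs : ℤ) = g j' by omega, Equiv.Perm.inv_apply_self]
          omega
        · rw [show ((g j').natAbs : ℤ) = -(g j') by omega, hgie, Equiv.Perm.inv_apply_self]
          omega
    · rintro ⟨j, ⟨hj, h, hh, hval⟩, rfl⟩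
      refine ⟨?_, g⁻¹ * h * g, hmemK h hh, ?_⟩
      · have := hne0 j (by omega)
        simp only [hψ]
        omega
      · have hkgi : (g⁻¹ * h * g) (g⁻¹ i) = g⁻¹ j ∨ (g⁻¹ * h * g) (g⁻¹ i) = -(g⁻¹ j) := by
        -- k (g⁻¹ i) = g⁻¹ (h i) = g⁻¹ (±j)
          simp only [Equiv.Perm.mul_apply, Equiv.Perm.apply_inv_self]
          rcases hval with h' | h'
          · left; rw [h']
          · right; rw [h', hgie]
        set k := g⁻¹ * h * g with hkk
        have hkE : ∀ z : ℤ, k (-z) = -(k z) := W_equiv (hK (hmemK h hh))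
        have hmain : k (ψ i) = ψ j ∨ k (ψ i) = -(ψ j) := by
          rcases le_or_gt 0 (g⁻¹ i) with hz | hz
          · rw [show ψ i = g⁻¹ i by simp only [hψ]; omega]
            rcases le_or_gt 0 (g⁻¹ j) with hzj | hzj
            · rw [show ψ j = g⁻¹ j by simp only [hψ]; omega]
              exact hkgi
            · rw [show ψ j = -(g⁻¹ j) by simp only [hψ]; omega]
              omega
          · rw [show ψ i = -(g⁻¹ i) by simp only [hψ]; omega, hkE]
            rcases le_or_gt 0 (g⁻¹ j) with hzj | hzj
            · rw [show ψ j = g⁻¹ j by simp only [hψ]; omega]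
              omega
            · rw [show ψ j = -(g⁻¹ j) by simp only [hψ]; omega]
              omega
        exact hmain
  -- injectivity of ψ on positives
  have hinj : ∀ i1 i2 : ℤ, i1 ≠ 0 → i2 ≠ 0 → 0 < i1 → 0 < i2 → ψ i1 = ψ i2 → i1 = i2 := by
    intro i1 i2 h1 h2 hp1 hp2 he
    simp only [hψ] at he
    have : g⁻¹ i1 = g⁻¹ i2 ∨ g⁻¹ i1 = -(g⁻¹ i2) := by omega
    rcases this with h | h
    · exact g⁻¹.injective h
    · rw [← hgie] at h
      have := g⁻¹.injective h
      omega
  have hncard : ∀ i : ℤ, i ≠ 0 → (posOrb K (ψ i)).ncard = (posOrb H i).ncard := by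
    intro i hi
    rw [horb i hi]
    apply Set.ncard_image_of_injOn
    intro a ha b hb hab
    exact hinj a b (by rcases ha with ⟨h,_⟩; omega) (by rcases hb with ⟨h,_⟩; omega)
      ha.1 hb.1 hab
  -- the bijection
  apply Finset.card_bij (fun i _ => ψ i)
  · intro i hi
    rw [Finset.mem_filter, Finset.mem_Ioc] at hi ⊢
    obtain ⟨⟨hi1, hi2⟩, hc, hn⟩ := hi
    refine ⟨⟨?_, ?_⟩, ?_, ?_⟩
    · have := hne0 i (by omega); simp only [hψ]; omega
    · have := W_natAbs hgi (z := i) (by omega); simp only [hψ]; omega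
    · have := hsn i (by omega)
      rw [show selfNeg K (ψ i) ↔ selfNeg H i from this.symm]
      exact hc
    · rw [hncard i (by omega)]; exact hn
  · intro i1 h1 i2 h2 he
    rw [Finset.mem_filter, Finset.mem_Ioc] at h1 h2
    exact hinj i1 i2 (by omega) (by omega) h1.1.1 h2.1.1 he
  · intro i' hi'
    rw [Finset.mem_filter, Finset.mem_Ioc] at hi'
    obtain ⟨⟨hi1, hi2⟩, hc, hn⟩ := hi'
    refine ⟨((g i').natAbs : ℤ), ?_, ?_⟩
    · rw [Finset.mem_filter, Finset.mem_Ioc]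
      have hgne := hne0' i' (by omega)
      have hψval : ψ ((g i').natAbs : ℤ) = i' := by
        simp only [hψ]
        rcases le_or_gt 0 (g i') with hz | hz
        · rw [show ((g i').natAbs : ℤ) = g i' by omega, Equiv.Perm.inv_apply_self]
          omega
        · rw [show ((g i').natAbs : ℤ) = -(g i') by omega, hgie, Equiv.Perm.inv_apply_self]
          omega
      refine ⟨⟨by omega, ?_⟩, ?_, ?_⟩
      · have := W_natAbs hg (z := i') (by omega); omega
      · have hiff := hsn ((g i').natAbs : ℤ) (by omega)
        rw [hψval] at hiff
        rw [hiff]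
        exact hc
      · have := hncard ((g i').natAbs : ℤ) (by omega)
        rw [hψval] at this
        rw [← this]; exact hn
    · simp only [hψ]
      rcases le_or_gt 0 (g i') with hz | hz
      · rw [show ((g i').natAbs : ℤ) = g i' by omega, Equiv.Perm.inv_apply_self]
        omega
      · rw [show ((g i').natAbs : ℤ) = -(g i') by omega, hgie, Equiv.Perm.inv_apply_self]
        omega

lemma Npos_conj {n : ℕ} (H K : Subgroup Q) (hH : H ≤ W n) (hK : K ≤ W n)
    {g : Q} (hg : g ∈ W n) (hcorr : ∀ y : Q, y ∈ H ↔ g⁻¹ * y * g ∈ K) (m : ℕ) :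
    Npos n H m = Npos n K m :=
  N_conj (fun p => p) H K hH hK hg hcorr m

lemma Nneg_conj {n : ℕ} (H K : Subgroup Q) (hH : H ≤ W n) (hK : K ≤ W n)
    {g : Q} (hg : g ∈ W n) (hcorr : ∀ y : Q, y ∈ H ↔ g⁻¹ * y * g ∈ K) (m : ℕ) :
    Nneg n H m = Nneg n K m := by
  unfold Nneg
  have h := N_conj (fun p => ¬ p) H K hH hK hg hcorr m
  convert h using 2 <;> exact filter_irrel _ _ _ _

lemma multiset_wt_pos (m : ℕ) (s : Multiset ℕ) (hs : ∀ c ∈ s, 0 < c) :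
    (s.map (fun c : ℕ => wt (fun a => 0 < a ∧ a.natAbs = m) ((c:ℕ):ℤ))).sum = m * s.count m := by
  induction s using Multiset.induction_on with
  | empty => simp
  | cons c s ih =>
    rw [Multiset.map_cons, Multiset.sum_cons, Multiset.count_cons,
      ih (fun x hx => hs x (Multiset.mem_cons_of_mem hx))]
    have hc : 0 < c := hs c (Multiset.mem_cons_self c s)
    by_cases hcm : c = m
    · rw [wt_pos ⟨by exact_mod_cast hc, by simp [hcm]⟩, if_pos (by omega)]
      simp [hcm]; ring
    · rw [wt_zero (by rintro ⟨-, h2⟩; simp at h2; omega), if_neg (by omega)]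
      simp

lemma multiset_wt_neg (m : ℕ) (s : Multiset ℕ) (hs : ∀ c ∈ s, 0 < c) :
    (s.map (fun c : ℕ => wt (fun a => a < 0 ∧ a.natAbs = m) (-((c:ℕ):ℤ)))).sum = m * s.count m := by
  induction s using Multiset.induction_on with
  | empty => simp
  | cons c s ih =>
    rw [Multiset.map_cons, Multiset.sum_cons, Multiset.count_cons,
      ih (fun x hx => hs x (Multiset.mem_cons_of_mem hx))]
    have hc : 0 < c := hs c (Multiset.mem_cons_self c s)
    by_cases hcm : c = m
    · rw [wt_pos ⟨by omega, by simp [hcm]⟩, if_pos (by omega)]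
      simp [hcm]; ring
    · rw [wt_zero (by rintro ⟨-, h2⟩; simp at h2; omega), if_neg (by omega)]
      simp

lemma toList_map_sum {α : Type*} (s : Multiset α) (f : α → ℕ) :
    (s.toList.map f).sum = (s.map f).sum := by
  conv_rhs => rw [← Multiset.coe_toList s]
  rw [Multiset.map_coe, Multiset.sum_coe]

lemma hat_sum_pos {n : ℕ} (lam : DP n) (m : ℕ) :
    (((hat lam).1).map (wt (fun a => 0 < a ∧ a.natAbs = m))).sum = m * lam.2.1.parts.count m := by
  have hrep : (hat lam).1 = lam.2.1.parts.toList.map (fun a : ℕ => (a:ℤ))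
      ++ lam.2.2.parts.toList.map (fun a : ℕ => -(a:ℤ)) := rfl
  rw [hrep, List.map_append, List.sum_append, List.map_map, List.map_map]
  have hzero : ((lam.2.2.parts.toList).map
      ((wt (fun a => 0 < a ∧ a.natAbs = m)) ∘ (fun a : ℕ => -(a:ℤ)))).sum = 0 := by
    apply List.sum_eq_zero
    intro x hx
    obtain ⟨c, hc, rfl⟩ := List.mem_map.1 hx
    have hcpos := lam.2.2.parts_pos (Multiset.mem_toList.1 hc)
    simp only [Function.comp_apply]
    exact wt_zero (by rintro ⟨h1, -⟩; omega)
  rw [hzero, add_zero]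
  have := toList_map_sum lam.2.1.parts
    (fun c : ℕ => wt (fun a => 0 < a ∧ a.natAbs = m) ((c:ℕ):ℤ))
  simp only [Function.comp_def]
  rw [this]
  exact multiset_wt_pos m _ (fun c hc => lam.2.1.parts_pos hc)

lemma hat_sum_neg {n : ℕ} (lam : DP n) (m : ℕ) :
    (((hat lam).1).map (wt (fun a => a < 0 ∧ a.natAbs = m))).sum = m * lam.2.2.parts.count m := by
  have hrep : (hat lam).1 = lam.2.1.parts.toList.map (fun a : ℕ => (a:ℤ))
      ++ lam.2.2.parts.toList.map (fun a : ℕ => -(a:ℤ)) := rfl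
  rw [hrep, List.map_append, List.sum_append, List.map_map, List.map_map]
  have hzero : ((lam.2.1.parts.toList).map
      ((wt (fun a => a < 0 ∧ a.natAbs = m)) ∘ (fun a : ℕ => (a:ℤ)))).sum = 0 := by
    apply List.sum_eq_zero
    intro x hx
    obtain ⟨c, hc, rfl⟩ := List.mem_map.1 hx
    have hcpos := lam.2.1.parts_pos (Multiset.mem_toList.1 hc)
    simp only [Function.comp_apply]
    exact wt_zero (by rintro ⟨h1, -⟩; omega)
  rw [hzero, zero_add]
  have := toList_map_sum lam.2.2.parts
    (fun c : ℕ => wt (fun a => a < 0 ∧ a.natAbs = m) (-((c:ℕ):ℤ)))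
  simp only [Function.comp_def]
  rw [this]
  exact multiset_wt_neg m _ (fun c hc => lam.2.2.parts_pos hc)

lemma parts_eq_of_counts {p q : Multiset ℕ} (hp : ∀ c ∈ p, 0 < c) (hq : ∀ c ∈ q, 0 < c)
    (h : ∀ m : ℕ, m * p.count m = m * q.count m) : p = q := by
  ext c
  by_cases hc : c = 0
  · subst hc
    rw [Multiset.count_eq_zero_of_notMem (fun h => by have := hp 0 h; omega),
      Multiset.count_eq_zero_of_notMem (fun h => by have := hq 0 h; omega)]
  · have := h c
    have hc' : 0 < c := by omega
    exact Nat.eq_of_mul_eq_mul_left hc' this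

lemma WL_finite {n : ℕ} {L : List ℤ} (h : sumAbs L ≤ n) : Finite (WL L) :=
  Finite.of_injective (Subgroup.inclusion (WL_le_W h)) (Subgroup.inclusion_injective _)

lemma DP_antisymm {n : ℕ} (lam mu : DP n)
    (h1 : ∃ g ∈ W n, ∀ y ∈ WA (hat mu), g⁻¹ * y * g ∈ WA (hat lam))
    (h2 : ∃ g ∈ W n, ∀ y ∈ WA (hat lam), g⁻¹ * y * g ∈ WA (hat mu)) : lam = mu := by
  obtain ⟨x, hx, hxc⟩ := h1
  obtain ⟨y, hy, hyc⟩ := h2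
  have hsumlam : sumAbs (hat lam).1 = n := (hat lam).2.2
  have hsummu : sumAbs (hat mu).1 = n := (hat mu).2.2
  haveI hfinlam : Finite (WL (hat lam).1) := WL_finite (n := n) (by omega)
  haveI hfinmu : Finite (WL (hat mu).1) := WL_finite (n := n) (by omega)
  set φ : Q →* Q := (MulAut.conj (x⁻¹ : Q)).toMonoidHom with hφ
  have hφval : ∀ z : Q, φ z = x⁻¹ * z * x := by
    intro z
    simp [hφ, MulAut.conj_apply]
  have hφinj : Function.Injective φ := (MulAut.conj (x⁻¹ : Q)).injective
  set K : Subgroup Q := Subgroup.map φ (WL (hat mu).1) with hK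
  have hKle : K ≤ WL (hat lam).1 := by
    rintro z hz
    obtain ⟨z', hz', rfl⟩ := Subgroup.mem_map.1 hz
    rw [hφval]
    exact hxc z' hz'
  -- the other direction, for cardinality
  set φ' : Q →* Q := (MulAut.conj (y⁻¹ : Q)).toMonoidHom with hφ'
  have hφ'val : ∀ z : Q, φ' z = y⁻¹ * z * y := by
    intro z
    simp [hφ', MulAut.conj_apply]
  have hφ'inj : Function.Injective φ' := (MulAut.conj (y⁻¹ : Q)).injective
  have hK'le : Subgroup.map φ' (WL (hat lam).1) ≤ WL (hat mu).1 := by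
    rintro z hz
    obtain ⟨z', hz', rfl⟩ := Subgroup.mem_map.1 hz
    rw [hφ'val]
    exact hyc z' hz'
  have hcard1 : Nat.card K = Nat.card (WL (hat mu).1) :=
    (Nat.card_congr (Subgroup.equivMapOfInjective (WL (hat mu).1) φ hφinj).toEquiv).symm
  have hcard2 : Nat.card (Subgroup.map φ' (WL (hat lam).1)) = Nat.card (WL (hat lam).1) :=
    (Nat.card_congr (Subgroup.equivMapOfInjective (WL (hat lam).1) φ' hφ'inj).toEquiv).symm
  have hle1 : Nat.card (WL (hat mu).1) ≤ Nat.card (WL (hat lam).1) := by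
    rw [← hcard1]
    exact Subgroup.card_le_of_le hKle
  have hle2 : Nat.card (WL (hat lam).1) ≤ Nat.card (WL (hat mu).1) := by
    rw [← hcard2]
    exact Subgroup.card_le_of_le hK'le
  have hKeq : K = WL (hat lam).1 :=
    Subgroup.eq_of_le_of_card_ge hKle (by omega)
  have hcorr : ∀ z : Q, z ∈ WL (hat mu).1 ↔ x⁻¹ * z * x ∈ WL (hat lam).1 := by
    intro z
    constructor
    · exact fun h => hxc z h
    · intro h
      rw [← hKeq] at h
      obtain ⟨z', hz', he⟩ := Subgroup.mem_map.1 h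
      rw [hφval] at he
      have : z' = z := by
        have := mul_left_cancel (mul_right_cancel he)
        exact this
      rw [← this]
      exact hz'
  have hNpos : ∀ m : ℕ, Npos n (WL (hat mu).1) m = Npos n (WL (hat lam).1) m :=
    fun m => Npos_conj _ _ (WL_le_W (by omega)) (WL_le_W (by omega)) hx hcorr m
  have hNneg : ∀ m : ℕ, Nneg n (WL (hat mu).1) m = Nneg n (WL (hat lam).1) m :=
    fun m => Nneg_conj _ _ (WL_le_W (by omega)) (WL_le_W (by omega)) hx hcorr m
  have hposcount : ∀ m : ℕ, m * mu.2.1.parts.count m = m * lam.2.1.parts.count m := by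
    intro m
    have e1 := Npos_WL (n := n) (hat mu).2.1 hsummu m
    have e2 := Npos_WL (n := n) (hat lam).2.1 hsumlam m
    have h := hNpos m
    rw [e1, e2, hat_sum_pos, hat_sum_pos] at h
    exact h
  have hnegcount : ∀ m : ℕ, m * mu.2.2.parts.count m = m * lam.2.2.parts.count m := by
    intro m
    have e1 := Nneg_WL (n := n) (hat mu).2.1 hsummu m
    have e2 := Nneg_WL (n := n) (hat lam).2.1 hsumlam m
    have h := hNneg m
    rw [e1, e2, hat_sum_neg, hat_sum_neg] at h
    exact h
  have hposparts : lam.2.1.parts = mu.2.1.parts :=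
    parts_eq_of_counts (fun c hc => lam.2.1.parts_pos hc) (fun c hc => mu.2.1.parts_pos hc)
      (fun m => (hposcount m).symm)
  have hnegparts : lam.2.2.parts = mu.2.2.parts :=
    parts_eq_of_counts (fun c hc => lam.2.2.parts_pos hc) (fun c hc => mu.2.2.parts_pos hc)
      (fun m => (hnegcount m).symm)
  obtain ⟨⟨k1, hk1⟩, p1, q1⟩ := lam
  obtain ⟨⟨k2, hk2⟩, p2, q2⟩ := mu
  simp only at hposparts hnegparts
  have e1 : p1.parts.sum = k1 := p1.parts_sum
  have e2 : p2.parts.sum = k2 := p2.parts_sum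
  have hk : k1 = k2 := by rw [← e1, ← e2, hposparts]
  subst hk
  have hp : p1 = p2 := Nat.Partition.ext hposparts
  have hq : q1 = q2 := Nat.Partition.ext hnegparts
  rw [hp, hq]

lemma cox_mem {n : ℕ} (A : SC n) : cox A ∈ WA A := by
  apply Subgroup.list_prod_mem
  intro x hx
  exact Subgroup.subset_closure hx

lemma phi_diag_pos (n : ℕ) (lam : DP n) : 0 < phiMat n lam lam := by
  rw [phiMat, phi]
  have hfin : Finite {q : W n ⧸ (WA (hat lam)).subgroupOf (W n) //
      ∃ x : W n, (QuotientGroup.mk x : W n ⧸ (WA (hat lam)).subgroupOf (W n)) = q ∧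
        (x : Q)⁻¹ * cox (hat lam) * x ∈ WA (hat lam)} := by
    haveI : Finite (W n ⧸ (WA (hat lam)).subgroupOf (W n)) := Quotient.finite _
    exact Subtype.finite
  have hne : Nonempty {q : W n ⧸ (WA (hat lam)).subgroupOf (W n) //
      ∃ x : W n, (QuotientGroup.mk x : W n ⧸ (WA (hat lam)).subgroupOf (W n)) = q ∧
        (x : Q)⁻¹ * cox (hat lam) * x ∈ WA (hat lam)} := by
    refine ⟨⟨QuotientGroup.mk 1, 1, rfl, ?_⟩⟩
    simpa using cox_mem (hat lam)
  have := Nat.card_pos (α := {q : W n ⧸ (WA (hat lam)).subgroupOf (W n) //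
      ∃ x : W n, (QuotientGroup.mk x : W n ⧸ (WA (hat lam)).subgroupOf (W n)) = q ∧
        (x : Q)⁻¹ * cox (hat lam) * x ∈ WA (hat lam)})
  exact_mod_cast this

lemma phi_tri (n : ℕ) (lam mu : DP n)
    (h : ¬ ∃ g ∈ W n, ∀ x ∈ WA (hat mu), g⁻¹ * x * g ∈ WA (hat lam)) :
    phiMat n lam mu = 0 := by
  by_contra hne
  apply h
  rw [phiMat, phi] at hne
  have hcard : Nat.card {q : W n ⧸ (WA (hat lam)).subgroupOf (W n) //
      ∃ x : W n, (QuotientGroup.mk x : W n ⧸ (WA (hat lam)).subgroupOf (W n)) = q ∧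
        (x : Q)⁻¹ * cox (hat mu) * x ∈ WA (hat lam)} ≠ 0 := by
    intro h0
    rw [h0] at hne
    simp at hne
  have hnonempty := (Nat.card_ne_zero.1 hcard).1
  obtain ⟨⟨q, x, hxq, hxmem⟩⟩ := hnonempty
  refine ⟨(x : Q), x.2, ?_⟩
  intro z hz
  exact key (hat lam) (hat mu) x.2 hxmem z hz

/-- the containment preorder used for triangularity -/
def rDP (n : ℕ) (mu lam : DP n) : Prop :=
  ∃ g ∈ W n, ∀ z ∈ WA (hat mu), g⁻¹ * z * g ∈ WA (hat lam)

lemma rDP_refl (n : ℕ) (lam : DP n) : rDP n lam lam :=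
  ⟨1, one_mem _, fun z hz => by simpa using hz⟩

lemma rDP_trans (n : ℕ) (a b c : DP n) (h1 : rDP n a b) (h2 : rDP n b c) : rDP n a c := by
  obtain ⟨g, hg, hgc⟩ := h1
  obtain ⟨h, hh, hhc⟩ := h2
  refine ⟨g * h, mul_mem hg hh, fun z hz => ?_⟩
  have : (g * h)⁻¹ * z * (g * h) = h⁻¹ * (g⁻¹ * z * g) * h := by group
  rw [this]
  exact hhc _ (hgc z hz)

theorem statement_0' (n : ℕ) :
    IsUnit (phiMat n) ∧
    (∀ lam : DP n, 0 < phiMat n lam lam) ∧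
    (∀ lam mu : DP n,
      (¬ ∃ g ∈ W n, ∀ x ∈ WA (hat mu), g⁻¹ * x * g ∈ WA (hat lam)) →
        phiMat n lam mu = 0) := by
  refine ⟨?_, phi_diag_pos n, phi_tri n⟩
  haveI hpo : IsPartialOrder (DP n) (rDP n) :=
    { refl := rDP_refl n
      trans := rDP_trans n
      antisymm := fun a b hab hba => (DP_antisymm b a hab hba).symm }
  obtain ⟨s, hlin, hsub⟩ := extend_partialOrder (rDP n)
  haveI := hlin
  letI : LinearOrder (DP n) :=
    { le := s
      lt := fun a b => s a b ∧ ¬ s b a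
      le_refl := fun a => Std.Refl.refl a
      le_trans := fun a b c hab hbc => IsTrans.trans a b c hab hbc
      le_antisymm := fun a b h1 h2 => Std.Antisymm.antisymm a b h1 h2
      lt_iff_le_not_ge := fun _ _ => Iff.rfl
      le_total := fun a b => Std.Total.total a b
      toDecidableLE := fun _ _ => Classical.propDecidable _
      toDecidableEq := fun _ _ => Classical.propDecidable _
      toDecidableLT := fun _ _ => Classical.propDecidable _ }
  have htri : (phiMat n).BlockTriangular OrderDual.toDual := by
    intro lam mu hlt
    by_contra hne
    have hr : rDP n mu lam := by
      by_contra hnr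
      exact hne (phi_tri n lam mu hnr)
    have hs : s mu lam := hsub mu lam hr
    have hlt' : s lam mu ∧ ¬ s mu lam := hlt
    exact hlt'.2 hs
  have hdet : (phiMat n).det = ∏ lam : DP n, phiMat n lam lam :=
    Matrix.det_of_lowerTriangular (phiMat n) htri
  have hdetpos : 0 < (phiMat n).det := by
    rw [hdet]
    exact Finset.prod_pos fun lam _ => phi_diag_pos n lam
  rw [Matrix.isUnit_iff_isUnit_det]
  exact isUnit_iff_ne_zero.2 (ne_of_gt hdetpos)


/-- For every `n ≥ 1` the matrix `(φ_λ(c_μ))_{λ,μ ∈ DP(n)}` over `ℚ` is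
invertible, `φ_λ(c_λ) > 0` for every `λ`, and `φ_λ(c_μ) = 0` unless `W_{μ̂}` is
contained in some `Wₙ`-conjugate of `W_{λ̂}`. -/
theorem statement_0 (n : ℕ) (hn : 1 ≤ n) :
    IsUnit (phiMat n) ∧
    (∀ lam : DP n, 0 < phiMat n lam lam) ∧
    (∀ lam mu : DP n,
      (¬ ∃ g ∈ W n, ∀ x ∈ WA (hat mu), g⁻¹ * x * g ∈ WA (hat lam)) →
        phiMat n lam mu = 0) :=
  statement_0' n

end GBA
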